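/- If a binary phylogenetic network N on X displays a binary phylogenetic network N' on X, then N' can be obtained from N by deleting, for each reticulation of N, at most one of its two incoming reticulation edges, and subsequently cleaning up. -/

import Mathlib

open scoped Classical
noncomputable section

/-- A (rooted binary phylogenetic) network datum: a finite directed graph on `ℕ`
with an optional leaf-labelling by `α`. -/
structure Net (α : Type) where
  verts : Finset ℕ
  edges : Finset (ℕ × ℕ)
  lab : ℕ → Option α

namespace Net

variable {α β : Type}

def Edge (N : Net α) (u v : ℕ) : Prop := (u, v) ∈ N.edges

def indeg (N : Net α) (v : ℕ) : ℕ := (N.edges.filter fun e => e.2 = v).card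
def outdeg (N : Net α) (v : ℕ) : ℕ := (N.edges.filter fun e => e.1 = v).card

/-- Reachability by directed paths. -/
def Reaches (N : Net α) : ℕ → ℕ → Prop := Relation.ReflTransGen N.Edge

def IsRoot (N : Net α) (v : ℕ) : Prop :=
  v ∈ N.verts ∧ N.indeg v = 0 ∧ N.outdeg v = 1
def IsLeaf (N : Net α) (v : ℕ) : Prop :=
  v ∈ N.verts ∧ N.indeg v = 1 ∧ N.outdeg v = 0
def IsTreeNode (N : Net α) (v : ℕ) : Prop :=
  v ∈ N.verts ∧ N.indeg v = 1 ∧ N.outdeg v = 2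
def IsRetic (N : Net α) (v : ℕ) : Prop :=
  v ∈ N.verts ∧ N.indeg v = 2 ∧ N.outdeg v = 1

/-- `N` is a rooted binary phylogenetic network on leaf set `α`. -/
def IsNetwork (N : Net α) : Prop :=
  (∀ e ∈ N.edges, e.1 ∈ N.verts ∧ e.2 ∈ N.verts) ∧
  (∀ u v, N.Edge u v → ¬ N.Reaches v u) ∧
  (∃! r, N.IsRoot r) ∧
  (∀ v ∈ N.verts, N.IsRoot v ∨ N.IsLeaf v ∨ N.IsTreeNode v ∨ N.IsRetic v) ∧
  (∀ v, (∃ x, N.lab v = some x) ↔ N.IsLeaf v) ∧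
  (∀ x : α, ∃! v, N.lab v = some x)

/-- Tree-child: every non-leaf node has a child that is a tree node or a leaf. -/
def TreeChild (N : Net α) : Prop :=
  N.IsNetwork ∧
  ∀ v ∈ N.verts, ¬ N.IsLeaf v → ∃ c, N.Edge v c ∧ (N.IsTreeNode c ∨ N.IsLeaf c)

def IsReticEdge (N : Net α) (e : ℕ × ℕ) : Prop := e ∈ N.edges ∧ N.IsRetic e.2

def deleteNode (N : Net α) (v : ℕ) : Net α :=
  ⟨N.verts.erase v, N.edges.filter fun e => e.1 ≠ v ∧ e.2 ≠ v, N.lab⟩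

def deleteEdge (N : Net α) (e : ℕ × ℕ) : Net α := ⟨N.verts, N.edges.erase e, N.lab⟩

def deleteEdges (N : Net α) (E : Finset (ℕ × ℕ)) : Net α := ⟨N.verts, N.edges \ E, N.lab⟩

/-- One step of cleaning up: delete an unlabelled outdegree-0 node, or suppress an
indegree-1 outdegree-1 node.  (In this simple-digraph encoding the parallel-edge rule
is subsumed: the inserted edge merges with an existing one, and the endpoints are then
suppressed by further steps.) -/
inductive CleanStep {α : Type} : Net α → Net α → Prop
  | delNode (N : Net α) (v : ℕ) (hv : v ∈ N.verts) (h0 : N.outdeg v = 0)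
      (hlab : N.lab v = none) : CleanStep N (N.deleteNode v)
  | suppress (N : Net α) (u v w : ℕ) (h1 : N.indeg v = 1) (h2 : N.outdeg v = 1)
      (hu : N.Edge u v) (hw : N.Edge v w) :
      CleanStep N ⟨N.verts.erase v,
        insert (u, w) (N.edges.filter fun e => e.1 ≠ v ∧ e.2 ≠ v), N.lab⟩

/-- `N` cleans up to `M`: apply clean-up steps until none applies. -/
def CleansTo (N M : Net α) : Prop :=
  Relation.ReflTransGen CleanStep N M ∧ ∀ M', ¬ CleanStep M M'

/-- Maximum subnetwork: delete one reticulation edge and clean up. -/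
def IsMaxSubnet (N M : Net α) : Prop :=
  ∃ e, N.IsReticEdge e ∧ CleansTo (N.deleteEdge e) M

/-- A reticulation edge is valid if deleting it and cleaning up removes exactly
2 nodes and 3 edges. -/
def ValidEdge (N : Net α) (e : ℕ × ℕ) : Prop :=
  N.IsReticEdge e ∧
  ∀ M, CleansTo (N.deleteEdge e) M →
    M.verts.card + 2 = N.verts.card ∧ M.edges.card + 3 = N.edges.card

/-- A valid network: all reticulation edges are valid. -/
def Valid (N : Net α) : Prop :=
  N.IsNetwork ∧ ∀ e, N.IsReticEdge e → N.ValidEdge e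

def Subgraph (M N : Net α) : Prop :=
  M.verts ⊆ N.verts ∧ M.edges ⊆ N.edges ∧ ∀ v ∈ M.verts, M.lab v = N.lab v

/-- One edge-subdivision step. -/
inductive SubdivStep {α : Type} : Net α → Net α → Prop
  | mk (N : Net α) (u v w : ℕ) (he : N.Edge u v) (hw : w ∉ N.verts) :
      SubdivStep N ⟨insert w N.verts,
        insert (u, w) (insert (w, v) (N.edges.erase (u, v))), N.lab⟩

/-- `M` is a subdivision of `N`. -/
def Subdivision (N M : Net α) : Prop := Relation.ReflTransGen SubdivStep N M

/-- Isomorphism of networks (preserving leaf labels). -/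
def Iso (N M : Net α) : Prop :=
  ∃ f : ℕ → ℕ, Set.BijOn f ↑N.verts ↑M.verts ∧
    (∀ u ∈ N.verts, ∀ v ∈ N.verts, (N.Edge u v ↔ M.Edge (f u) (f v))) ∧
    ∀ v ∈ N.verts, N.lab v = M.lab (f v)

/-- `N` displays `M`: some subgraph of `N` is (isomorphic to) a subdivision of `M`. -/
def Displays (N M : Net α) : Prop :=
  ∃ S M', Subgraph S N ∧ Subdivision M M' ∧ Iso M' S

/-- Leaf-descendant (label) set of a node. -/
def descSet (N : Net α) (v : ℕ) : Set α :=
  {x | ∃ l, N.lab l = some x ∧ N.Reaches v l}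

def Adj (N : Net α) (u v : ℕ) : Prop := N.Edge u v ∨ N.Edge v u

def ConnectedIn (N : Net α) (S : Finset ℕ) (u v : ℕ) : Prop :=
  Relation.ReflTransGen (fun a b => a ∈ S ∧ b ∈ S ∧ N.Adj a b) u v

/-- A biconnected vertex set: at least 3 nodes, connected, and no cut-node. -/
def BiconnectedSet (N : Net α) (S : Finset ℕ) : Prop :=
  3 ≤ S.card ∧ S ⊆ N.verts ∧
  (∀ u ∈ S, ∀ v ∈ S, N.ConnectedIn S u v) ∧
  ∀ c ∈ S, ∀ u ∈ S.erase c, ∀ v ∈ S.erase c, N.ConnectedIn (S.erase c) u v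

/-- A biconnected component: a maximal biconnected set. -/
def BlobSet (N : Net α) (S : Finset ℕ) : Prop :=
  N.BiconnectedSet S ∧ ∀ T, N.BiconnectedSet T → S ⊆ T → S = T

/-- A blob: either a biconnected component, or a tree node in no biconnected component. -/
def IsBlob (N : Net α) (S : Finset ℕ) : Prop :=
  N.BlobSet S ∨ ∃ t, S = {t} ∧ N.IsTreeNode t ∧ ∀ T, N.BlobSet T → t ∉ T

/-- The top node of a blob: the node of the blob from which all its nodes are reachable. -/
def TopNode (N : Net α) (S : Finset ℕ) (v : ℕ) : Prop :=
  v ∈ S ∧ ∀ u ∈ S, N.Reaches v u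

/-- The blob tree of `N` contains a blob node labelled `A`. -/
def HasBlobNode (N : Net α) (A : Set α) : Prop :=
  ∃ S v, N.IsBlob S ∧ N.TopNode S v ∧ N.descSet v = A

/-- The blob tree of `N` has an edge from blob node `A` to blob node `B`. -/
def BTEdge (N : Net α) (A B : Set α) : Prop :=
  ∃ S T u v, N.IsBlob S ∧ N.IsBlob T ∧ S ≠ T ∧ N.TopNode S u ∧ N.TopNode T v ∧
    N.descSet u = A ∧ N.descSet v = B ∧ ∃ w ∈ S, N.Edge w v

def reticCount (N : Net α) (S : Finset ℕ) : ℕ := (S.filter fun v => N.IsRetic v).card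

/-- `N` is a level-`k` network. -/
def IsLevel (N : Net α) (k : ℕ) : Prop :=
  (∀ S, N.BiconnectedSet S → N.reticCount S ≤ k) ∧
  (k = 0 ∨ ∃ S, N.BiconnectedSet S ∧ N.reticCount S = k)

/-- `M` is a maximum lower-level subnetwork (MLLS) of the level-`k` network `N`:
obtained by deleting exactly one valid reticulation edge from every level-`k`
biconnected component and cleaning up. -/
def IsMLLS (N : Net α) (k : ℕ) (M : Net α) : Prop :=
  ∃ E : Finset (ℕ × ℕ),
    (∀ e ∈ E, N.ValidEdge e) ∧
    (∀ S, N.BlobSet S → N.reticCount S = k → ∃! e, e ∈ E ∧ e.1 ∈ S ∧ e.2 ∈ S) ∧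
    (∀ e ∈ E, ∃ S, N.BlobSet S ∧ N.reticCount S = k ∧ e.1 ∈ S ∧ e.2 ∈ S) ∧
    CleansTo (N.deleteEdges E) M

/-- A cherry on two leaves. -/
def Cherry (N : Net α) (x y : ℕ) : Prop :=
  N.IsLeaf x ∧ N.IsLeaf y ∧ x ≠ y ∧ ∃ p, N.Edge p x ∧ N.Edge p y

/-- A reticulated cherry on two leaves, with the reticulation on `y`. -/
def RetCherry (N : Net α) (x y : ℕ) : Prop :=
  N.IsLeaf x ∧ N.IsLeaf y ∧
  ∃ p r, N.IsRetic r ∧ N.Edge r y ∧ N.Edge p x ∧ N.Edge p r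

/-- A reticulated cherry shape on non-reticulation nodes `x, y` with nodes
`px, py, gy` and edges `(px,x), (px,py), (gy,py), (py,y)`, `py` a reticulation. -/
def RetCherryShape (N : Net α) (x y px py gy : ℕ) : Prop :=
  ¬ N.IsRetic x ∧ ¬ N.IsRetic y ∧ N.IsRetic py ∧ px ≠ gy ∧
  N.Edge px x ∧ N.Edge px py ∧ N.Edge gy py ∧ N.Edge py y

def DirPath (N : Net α) (l : List ℕ) : Prop := l ≠ [] ∧ l.Chain' N.Edge

/-- `l` is the node sequence of an up-down path from `x` to `y`: a directed path from
an apex down to `x`, reversed, followed by a directed path from the apex down to `y`. -/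
def IsUpDownPath (N : Net α) (x y : ℕ) (l : List ℕ) : Prop :=
  ∃ p q : List ℕ, N.DirPath p ∧ N.DirPath q ∧ p.head? = q.head? ∧
    p.getLast? = some x ∧ q.getLast? = some y ∧ l = p.reverse ++ q.tail

/-- `n` is the shortest up-down distance between `x` and `y` (an up-down path with `n`
edges has `n+1` nodes). -/
def IsUpDownDist (N : Net α) (x y n : ℕ) : Prop :=
  (∃ l, N.IsUpDownPath x y l ∧ l.length = n + 1) ∧
  ∀ l, N.IsUpDownPath x y l → n + 1 ≤ l.length

def relabel (N : Net α) (f : α → β) : Net β :=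
  ⟨N.verts, N.edges, fun v => (N.lab v).map f⟩

/-- Collapse the pendant subnetwork rooted at `y` to a single leaf labelled `A`. -/
def collapseAt (N : Net α) (y : ℕ) (A : α) : Net α :=
  ⟨N.verts.filter (fun v => v = y ∨ ¬ N.Reaches y v),
   N.edges.filter (fun e => ¬ N.Reaches y e.1),
   fun v => if v = y then some A else N.lab v⟩

/-- Leaf-descendant set for networks whose leaves are labelled by sets of taxa. -/
def descUnion (N : Net (Set α)) (v : ℕ) : Set α :=
  {x | ∃ l s, N.lab l = some s ∧ x ∈ s ∧ N.Reaches v l}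

def HasBlobNodeU (N : Net (Set α)) (A : Set α) : Prop :=
  ∃ S v, N.IsBlob S ∧ N.TopNode S v ∧ N.descUnion v = A

/-- `M` is a subnetwork of `N`: displayed by `N` and not `N` itself. -/
def Subnet (N M : Net α) : Prop := M.IsNetwork ∧ N.Displays M ∧ ¬ N.Iso M

/-- Equality of sets of networks up to isomorphism. -/
def SetEquiv (S T : Set (Net α)) : Prop :=
  ∀ M, (∃ M₁ ∈ S, Iso M M₁) ↔ ∃ M₂ ∈ T, Iso M M₂

/-- The subnetworks of `N` of level at most `k - 1`. -/
def lowerSubnets (N : Net α) (k : ℕ) : Set (Net α) :=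
  {M | N.Subnet M ∧ ∃ j < k, M.IsLevel j}

/-- The set of all MLLSs of `N`. -/
def mllsSet (N : Net α) : Set (Net α) :=
  {M | ∃ k, N.IsLevel k ∧ N.IsMLLS k M}

end Net

namespace Net

variable {α : Type}

def Closed (P : Net α) : Prop := ∀ e ∈ P.edges, e.1 ∈ P.verts ∧ e.2 ∈ P.verts

def Acyc (P : Net α) : Prop := ∀ u v, P.Edge u v → ¬ P.Reaches v u

lemma Edge.reach {P : Net α} {u v : ℕ} (h : P.Edge u v) : P.Reaches u v :=
  Relation.ReflTransGen.single h

lemma acyc_ne {P : Net α} (hA : P.Acyc) {u v} (h : P.Edge u v) : u ≠ v := by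
  rintro rfl; exact hA u u h Relation.ReflTransGen.refl

lemma edge_outdeg_pos {P : Net α} {v w} (hw : P.Edge v w) : 0 < P.outdeg v :=
  Finset.card_pos.2 ⟨(v, w), Finset.mem_filter.2 ⟨hw, rfl⟩⟩

lemma edge_indeg_pos {P : Net α} {u v} (hu : P.Edge u v) : 0 < P.indeg v :=
  Finset.card_pos.2 ⟨(u, v), Finset.mem_filter.2 ⟨hu, rfl⟩⟩

lemma exists_edge_of_outdeg_pos {P : Net α} {v} (h : 0 < P.outdeg v) : ∃ w, P.Edge v w := by
  obtain ⟨e, he⟩ := Finset.card_pos.1 h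
  rw [Finset.mem_filter] at he
  exact ⟨e.2, by have : e = (v, e.2) := by rw [← he.2]
                 rw [Edge, ← this]; exact he.1⟩

lemma exists_edge_of_indeg_pos {P : Net α} {v} (h : 0 < P.indeg v) : ∃ u, P.Edge u v := by
  obtain ⟨e, he⟩ := Finset.card_pos.1 h
  rw [Finset.mem_filter] at he
  exact ⟨e.1, by have : e = (e.1, v) := by rw [← he.2]
                 rw [Edge, ← this]; exact he.1⟩

lemma indeg_unique {P : Net α} {u u' v} (h : P.indeg v ≤ 1)
    (h1 : P.Edge u v) (h2 : P.Edge u' v) : u = u' := by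
  have := Finset.card_le_one.1 h (u, v) (Finset.mem_filter.2 ⟨h1, rfl⟩)
    (u', v) (Finset.mem_filter.2 ⟨h2, rfl⟩)
  exact congrArg Prod.fst this

lemma outdeg_unique {P : Net α} {u w w'} (h : P.outdeg u ≤ 1)
    (h1 : P.Edge u w) (h2 : P.Edge u w') : w = w' := by
  have := Finset.card_le_one.1 h (u, w) (Finset.mem_filter.2 ⟨h1, rfl⟩)
    (u, w') (Finset.mem_filter.2 ⟨h2, rfl⟩)
  exact congrArg Prod.snd this

lemma reaches_mono {P Q : Net α} (h : ∀ a b, P.Edge a b → Q.Edge a b) {u v} :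
    P.Reaches u v → Q.Reaches u v :=
  fun hr => Relation.ReflTransGen.mono (fun a b => h a b) u v hr

lemma reaches_lift {P Q : Net α} (h : ∀ a b, P.Edge a b → Q.Reaches a b) {u v}
    (hr : P.Reaches u v) : Q.Reaches u v := by
  induction hr with
  | refl => exact Relation.ReflTransGen.refl
  | tail _ e ih => exact ih.trans (h _ _ e)

lemma reaches_map {P Q : Net α} (f : ℕ → ℕ)
    (h : ∀ a b, P.Edge a b → Q.Reaches (f a) (f b)) {u v}
    (hr : P.Reaches u v) : Q.Reaches (f u) (f v) := by
  induction hr with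
  | refl => exact Relation.ReflTransGen.refl
  | tail _ e ih => exact ih.trans (h _ _ e)

lemma mem_verts_of_reaches {P : Net α} (hC : P.Closed) {v x} (hv : v ∈ P.verts)
    (h : P.Reaches v x) : x ∈ P.verts := by
  induction h with
  | refl => exact hv
  | tail _ e _ => exact (hC _ e).2

def reachSet (P : Net α) (v : ℕ) : Finset ℕ := P.verts.filter (fun x => P.Reaches v x)

def ancSet (P : Net α) (v : ℕ) : Finset ℕ := P.verts.filter (fun x => P.Reaches x v)

lemma reachSet_card_lt {P : Net α} (hC : P.Closed) (hA : P.Acyc) {v c}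
    (hv : v ∈ P.verts) (e : P.Edge v c) : (P.reachSet c).card < (P.reachSet v).card := by
  apply Finset.card_lt_card
  constructor
  · intro x hx
    rw [reachSet, Finset.mem_filter] at hx ⊢
    exact ⟨hx.1, (e.reach).trans hx.2⟩
  · intro hsub
    have hvv : v ∈ P.reachSet v := Finset.mem_filter.2 ⟨hv, Relation.ReflTransGen.refl⟩
    have := hsub hvv
    rw [reachSet, Finset.mem_filter] at this
    exact hA v c e this.2

lemma ancSet_card_lt {P : Net α} (hC : P.Closed) (hA : P.Acyc) {u v}
    (hv : v ∈ P.verts) (e : P.Edge u v) : (P.ancSet u).card < (P.ancSet v).card := by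
  apply Finset.card_lt_card
  constructor
  · intro x hx
    rw [ancSet, Finset.mem_filter] at hx ⊢
    exact ⟨hx.1, hx.2.trans e.reach⟩
  · intro hsub
    have hvv : v ∈ P.ancSet v := Finset.mem_filter.2 ⟨hv, Relation.ReflTransGen.refl⟩
    have := hsub hvv
    rw [ancSet, Finset.mem_filter] at this
    exact hA u v e this.2

/-- Every vertex reaches a labelled vertex, provided sinks are labelled. -/
lemma reach_label {P : Net α} (hC : P.Closed) (hA : P.Acyc)
    (hlf : ∀ v ∈ P.verts, P.outdeg v = 0 → ∃ x, P.lab v = some x) :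
    ∀ v ∈ P.verts, ∃ l, (∃ x, P.lab l = some x) ∧ P.Reaches v l := by
  intro v hv
  generalize hn : (P.reachSet v).card = n
  induction n using Nat.strong_induction_on generalizing v with
  | _ n ih =>
    by_cases h0 : P.outdeg v = 0
    · exact ⟨v, hlf v hv h0, Relation.ReflTransGen.refl⟩
    · obtain ⟨w, hw⟩ := exists_edge_of_outdeg_pos (Nat.pos_of_ne_zero h0)
      have hwv : w ∈ P.verts := (hC _ hw).2
      obtain ⟨l, hl, hr⟩ := ih _ (hn ▸ reachSet_card_lt hC hA hv hw) w hwv rfl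
      exact ⟨l, hl, (hw.reach).trans hr⟩

/-- Every vertex is reachable from the (unique) source. -/
lemma root_reaches {P : Net α} (hC : P.Closed) (hA : P.Acyc) {r : ℕ}
    (hr : ∀ v ∈ P.verts, P.indeg v = 0 → v = r) :
    ∀ v ∈ P.verts, P.Reaches r v := by
  intro v hv
  generalize hn : (P.ancSet v).card = n
  induction n using Nat.strong_induction_on generalizing v with
  | _ n ih =>
    by_cases h0 : P.indeg v = 0
    · rw [hr v hv h0]
      exact Relation.ReflTransGen.refl
    · obtain ⟨u, hu⟩ := exists_edge_of_indeg_pos (Nat.pos_of_ne_zero h0)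
      have huv : u ∈ P.verts := (hC _ hu).1
      exact (ih _ (hn ▸ ancSet_card_lt hC hA hv hu) u huv rfl).trans hu.reach

lemma iso_symm {A B : Net α} (h : A.Iso B) : B.Iso A := by
  obtain ⟨f, hbij, he, hl⟩ := h
  set g := Function.invFunOn f ↑A.verts with hg
  have hinv : Set.InvOn g f ↑A.verts ↑B.verts :=
    ⟨hbij.injOn.leftInvOn_invFunOn, hbij.surjOn.rightInvOn_invFunOn⟩
  have hbij' : Set.BijOn g ↑B.verts ↑A.verts := hbij.symm hinv.symm
  refine ⟨g, hbij', ?_, ?_⟩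
  · intro u hu v hv
    have hgu : g u ∈ A.verts := hbij'.mapsTo hu
    have hgv : g v ∈ A.verts := hbij'.mapsTo hv
    rw [he _ hgu _ hgv, hinv.2 hu, hinv.2 hv]
  · intro v hv
    have hgv : g v ∈ A.verts := hbij'.mapsTo hv
    rw [hl _ hgv, hinv.2 hv]

lemma iso_indeg {A B : Net α} {f : ℕ → ℕ} (hC : A.Closed) (hD : B.Closed)
    (hb : Set.BijOn f ↑A.verts ↑B.verts)
    (he : ∀ u ∈ A.verts, ∀ v ∈ A.verts, (A.Edge u v ↔ B.Edge (f u) (f v)))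
    {v : ℕ} (hv : v ∈ A.verts) : A.indeg v = B.indeg (f v) := by
  unfold indeg
  apply Finset.card_bij (fun e _ => (f e.1, f e.2))
  · rintro ⟨a, b⟩ hab
    rw [Finset.mem_filter] at hab ⊢
    obtain ⟨hmem, hb2⟩ := hab
    simp only at hb2; subst hb2
    exact ⟨(he _ (hC _ hmem).1 _ (hC _ hmem).2).1 hmem, rfl⟩
  · rintro ⟨a, b⟩ hab ⟨a', b'⟩ hab' heq
    rw [Finset.mem_filter] at hab hab'
    simp only [Prod.mk.injEq] at heq
    have h1 := hb.injOn (Finset.mem_coe.2 (hC _ hab.1).1) (Finset.mem_coe.2 (hC _ hab'.1).1) heq.1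
    have h2 := hb.injOn (Finset.mem_coe.2 (hC _ hab.1).2) (Finset.mem_coe.2 (hC _ hab'.1).2) heq.2
    exact Prod.ext h1 h2
  · rintro ⟨a, b⟩ hab
    rw [Finset.mem_filter] at hab
    obtain ⟨hmem, hb2⟩ := hab
    simp only at hb2; subst hb2
    obtain ⟨a', ha', hfa⟩ := hb.surjOn (hD _ hmem).1
    refine ⟨(a', v), Finset.mem_filter.2 ⟨?_, rfl⟩, by simp [hfa]⟩
    exact (he _ (Finset.mem_coe.1 ha') _ hv).2 (show B.Edge (f a') (f v) by rw [hfa]; exact hmem)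

end Net

namespace Net

variable {X : Type}

/-- The result of one subdivision step. -/
def subdivNet (M : Net X) (u v w : ℕ) : Net X :=
  ⟨insert w M.verts, insert (u, w) (insert (w, v) (M.edges.erase (u, v))), M.lab⟩

lemma subdivStep_iff {M M₂ : Net X} (h : SubdivStep M M₂) :
    ∃ u v w, M.Edge u v ∧ w ∉ M.verts ∧ M₂ = M.subdivNet u v w := by
  cases h with
  | mk u v w he hw => exact ⟨u, v, w, he, hw, rfl⟩

section SubdivNet

variable {M : Net X} {u v w : ℕ} (hC : M.Closed) (hA : M.Acyc)
  (he : M.Edge u v) (hw : w ∉ M.verts)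

lemma subdivNet_edge_iff {a b : ℕ} :
    (M.subdivNet u v w).Edge a b ↔
      (a = u ∧ b = w) ∨ (a = w ∧ b = v) ∨ ((a, b) ∈ M.edges ∧ ¬(a = u ∧ b = v)) := by
  show (a, b) ∈ insert (u, w) (insert (w, v) (M.edges.erase (u, v))) ↔ _
  simp only [Finset.mem_insert, Finset.mem_erase, Prod.mk.injEq, ne_eq]
  tauto

include hC hw in
lemma subdiv_fresh_edge {e : ℕ × ℕ} (hme : e ∈ M.edges) : e.1 ≠ w ∧ e.2 ≠ w := by
  have h := hC _ hme
  exact ⟨fun h1 => hw (h1 ▸ h.1), fun h2 => hw (h2 ▸ h.2)⟩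

include hC hA he hw in
lemma subdivNet_indeg (x : ℕ) :
    (M.subdivNet u v w).indeg x = if x = w then 1 else M.indeg x := by
  have huv : (u, v) ∈ M.edges := he
  have hu : u ∈ M.verts := (hC _ huv).1
  have hv : v ∈ M.verts := (hC _ huv).2
  have hvw : v ≠ w := by rintro rfl; exact hw hv
  have huw : u ≠ w := by rintro rfl; exact hw hu
  unfold indeg subdivNet
  simp only
  by_cases hxw : x = w
  · subst hxw
    rw [if_pos rfl]
    have h1 : ((insert (u, x) (insert (x, v) (M.edges.erase (u, v)))).filter
        fun e => e.2 = x) = {(u, x)} := by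
      apply Finset.ext
      rintro ⟨a, b⟩
      simp only [Finset.mem_filter, Finset.mem_insert, Finset.mem_erase,
        Finset.mem_singleton, Prod.mk.injEq]
      constructor
      · rintro ⟨h1 | h1 | h1, h2⟩
        · exact ⟨h1.1, h1.2⟩
        · exact absurd (h1.2 ▸ h2 : v = x) hvw
        · exact absurd ((subdiv_fresh_edge hC hw h1.2).2) (by simp [h2])
      · rintro ⟨rfl, rfl⟩
        exact ⟨Or.inl ⟨rfl, rfl⟩, rfl⟩
    rw [h1, Finset.card_singleton]
  · rw [if_neg hxw]
    by_cases hxv : x = v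
    · subst hxv
      have h1 : ((insert (u, w) (insert (w, x) (M.edges.erase (u, x)))).filter
          fun e => e.2 = x) = insert (w, x) ((M.edges.filter fun e => e.2 = x).erase (u, x)) := by
        apply Finset.ext
        rintro ⟨a, b⟩
        simp only [Finset.mem_filter, Finset.mem_insert, Finset.mem_erase,
          Prod.mk.injEq]
        constructor
        · rintro ⟨h1 | h1 | h1, h2⟩
          · exact absurd (h1.2 ▸ h2 : w = x) (fun hh => hxw hh.symm)
          · exact Or.inl ⟨h1.1, h1.2⟩
          · exact Or.inr ⟨h1.1, h1.2, h2⟩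
        · rintro (⟨rfl, rfl⟩ | ⟨hne, hmem, h2⟩)
          · exact ⟨Or.inr (Or.inl ⟨rfl, rfl⟩), rfl⟩
          · exact ⟨Or.inr (Or.inr ⟨hne, hmem⟩), h2⟩
      rw [h1]
      have h2 : (u, x) ∈ M.edges.filter fun e => e.2 = x := Finset.mem_filter.2 ⟨huv, rfl⟩
      have h3 : (w, x) ∉ (M.edges.filter fun e => e.2 = x).erase (u, x) := by
        intro hmem
        have := Finset.mem_of_mem_erase hmem
        rw [Finset.mem_filter] at this
        exact (subdiv_fresh_edge hC hw this.1).1 rfl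
      rw [Finset.card_insert_of_notMem h3, Finset.card_erase_of_mem h2]
      have : 0 < (M.edges.filter fun e => e.2 = x).card := Finset.card_pos.2 ⟨_, h2⟩
      omega
    · have h1 : ((insert (u, w) (insert (w, v) (M.edges.erase (u, v)))).filter
          fun e => e.2 = x) = M.edges.filter fun e => e.2 = x := by
        apply Finset.ext
        rintro ⟨a, b⟩
        simp only [Finset.mem_filter, Finset.mem_insert, Finset.mem_erase, Prod.mk.injEq]
        constructor
        · rintro ⟨h1 | h1 | h1, h2⟩
          · exact absurd (h1.2 ▸ h2 : w = x) (fun hh => hxw hh.symm)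
          · exact absurd (h1.2 ▸ h2 : v = x) (fun hh => hxv hh.symm)
          · exact ⟨h1.2, h2⟩
        · rintro ⟨hmem, h2⟩
          refine ⟨Or.inr (Or.inr ⟨?_, hmem⟩), h2⟩
          exact fun hcon => hxv (h2.symm.trans (congrArg Prod.snd hcon))
      rw [h1]

include hC hA he hw in
lemma subdivNet_outdeg (x : ℕ) :
    (M.subdivNet u v w).outdeg x = if x = w then 1 else M.outdeg x := by
  have huv : (u, v) ∈ M.edges := he
  have hu : u ∈ M.verts := (hC _ huv).1
  have hv : v ∈ M.verts := (hC _ huv).2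
  have hvw : v ≠ w := by rintro rfl; exact hw hv
  have huw : u ≠ w := by rintro rfl; exact hw hu
  unfold outdeg subdivNet
  simp only
  by_cases hxw : x = w
  · subst hxw
    rw [if_pos rfl]
    have h1 : ((insert (u, x) (insert (x, v) (M.edges.erase (u, v)))).filter
        fun e => e.1 = x) = {(x, v)} := by
      apply Finset.ext
      rintro ⟨a, b⟩
      simp only [Finset.mem_filter, Finset.mem_insert, Finset.mem_erase,
        Finset.mem_singleton, Prod.mk.injEq]
      constructor
      · rintro ⟨h1 | h1 | h1, h2⟩
        · exact absurd (h1.1 ▸ h2 : u = x) huw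
        · exact ⟨h1.1, h1.2⟩
        · exact absurd ((subdiv_fresh_edge hC hw h1.2).1) (by simp [h2])
      · rintro ⟨rfl, rfl⟩
        exact ⟨Or.inr (Or.inl ⟨rfl, rfl⟩), rfl⟩
    rw [h1, Finset.card_singleton]
  · rw [if_neg hxw]
    by_cases hxu : x = u
    · subst hxu
      have h1 : ((insert (x, w) (insert (w, v) (M.edges.erase (x, v)))).filter
          fun e => e.1 = x) = insert (x, w) ((M.edges.filter fun e => e.1 = x).erase (x, v)) := by
        apply Finset.ext
        rintro ⟨a, b⟩
        simp only [Finset.mem_filter, Finset.mem_insert, Finset.mem_erase, Prod.mk.injEq]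
        constructor
        · rintro ⟨h1 | h1 | h1, h2⟩
          · exact Or.inl ⟨h1.1, h1.2⟩
          · exact absurd (h1.1 ▸ h2 : w = x) (fun hh => hxw hh.symm)
          · exact Or.inr ⟨h1.1, h1.2, h2⟩
        · rintro (⟨rfl, rfl⟩ | ⟨hne, hmem, h2⟩)
          · exact ⟨Or.inl ⟨rfl, rfl⟩, rfl⟩
          · exact ⟨Or.inr (Or.inr ⟨hne, hmem⟩), h2⟩
      rw [h1]
      have h2 : (x, v) ∈ M.edges.filter fun e => e.1 = x := Finset.mem_filter.2 ⟨huv, rfl⟩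
      have h3 : (x, w) ∉ (M.edges.filter fun e => e.1 = x).erase (x, v) := by
        intro hmem
        have := Finset.mem_of_mem_erase hmem
        rw [Finset.mem_filter] at this
        exact (subdiv_fresh_edge hC hw this.1).2 rfl
      rw [Finset.card_insert_of_notMem h3, Finset.card_erase_of_mem h2]
      have : 0 < (M.edges.filter fun e => e.1 = x).card := Finset.card_pos.2 ⟨_, h2⟩
      omega
    · have h1 : ((insert (u, w) (insert (w, v) (M.edges.erase (u, v)))).filter
          fun e => e.1 = x) = M.edges.filter fun e => e.1 = x := by
        apply Finset.ext
        rintro ⟨a, b⟩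
        simp only [Finset.mem_filter, Finset.mem_insert, Finset.mem_erase, Prod.mk.injEq]
        constructor
        · rintro ⟨h1 | h1 | h1, h2⟩
          · exact absurd (h1.1 ▸ h2 : u = x) (fun hh => hxu hh.symm)
          · exact absurd (h1.1 ▸ h2 : w = x) (fun hh => hxw hh.symm)
          · exact ⟨h1.2, h2⟩
        · rintro ⟨hmem, h2⟩
          refine ⟨Or.inr (Or.inr ⟨?_, hmem⟩), h2⟩
          exact fun hcon => hxu (h2.symm.trans (congrArg Prod.fst hcon))
      rw [h1]

end SubdivNet

end Net

namespace Net

variable {X : Type}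

structure GoodSub (N' M : Net X) : Prop where
  closed : M.Closed
  acy : M.Acyc
  nopar : ∀ p q r, M.Edge p q → M.Edge q r → M.indeg q = 1 → M.outdeg q = 1 → ¬ M.Edge p r
  verts_sub : N'.verts ⊆ M.verts
  deg_old : ∀ x ∈ N'.verts, M.indeg x = N'.indeg x ∧ M.outdeg x = N'.outdeg x
  deg_new : ∀ x ∈ M.verts, x ∉ N'.verts → M.indeg x = 1 ∧ M.outdeg x = 1
  lab_eq : M.lab = N'.lab

lemma network_no11 {N' : Net X} (hN' : N'.IsNetwork) {x} (hx : x ∈ N'.verts) :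
    ¬(N'.indeg x = 1 ∧ N'.outdeg x = 1) := by
  rintro ⟨h1, h2⟩
  rcases hN'.2.2.2.1 x hx with h | h | h | h <;>
    · obtain ⟨-, ha, hb⟩ := h
      omega

lemma goodSub_refl {N' : Net X} (hN' : N'.IsNetwork) : GoodSub N' N' :=
  ⟨hN'.1, hN'.2.1,
   fun _ q _ h1 _ hq1 hq2 => absurd ⟨hq1, hq2⟩ (network_no11 hN' (hN'.1 _ h1).2),
   Finset.Subset.refl _, fun _ _ => ⟨rfl, rfl⟩, fun _ hx hnx => absurd hx hnx, rfl⟩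

lemma goodSub_step {N' M M₂ : Net X} (hg : GoodSub N' M) (hs : SubdivStep M M₂) :
    GoodSub N' M₂ := by
  obtain ⟨u, v, w, he, hw, rfl⟩ := subdivStep_iff hs
  have hC := hg.closed
  have hA := hg.acy
  have hu : u ∈ M.verts := (hC _ he).1
  have hv : v ∈ M.verts := (hC _ he).2
  have huw : u ≠ w := by rintro rfl; exact hw hu
  have hvw : v ≠ w := by rintro rfl; exact hw hv
  have din := subdivNet_indeg hC hA he hw
  have dout := subdivNet_outdeg hC hA he hw
  have hlift : ∀ a b, (M.subdivNet u v w).Edge a b →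
      M.Reaches (if a = w then v else a) (if b = w then v else b) := by
    intro a b hab
    rcases (subdivNet_edge_iff (M := M)).1 hab with ⟨ha, hb⟩ | ⟨ha, hb⟩ | ⟨hm, -⟩
    · rw [ha, hb, if_neg huw, if_pos rfl]; exact he.reach
    · rw [ha, hb, if_pos rfl, if_neg hvw]; exact Relation.ReflTransGen.refl
    · have hf1 : a ≠ w := (subdiv_fresh_edge hC hw hm).1
      have hf2 : b ≠ w := (subdiv_fresh_edge hC hw hm).2
      rw [if_neg hf1, if_neg hf2]; exact Edge.reach hm
  have hacy : (M.subdivNet u v w).Acyc := by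
    intro a b hab hba
    have hba' : M.Reaches (if b = w then v else b) (if a = w then v else a) :=
      reaches_map (fun x => if x = w then v else x) hlift hba
    rcases (subdivNet_edge_iff (M := M)).1 hab with ⟨ha, hb⟩ | ⟨ha, hb⟩ | ⟨hm, -⟩
    · rw [ha, hb, if_pos rfl, if_neg huw] at hba'
      exact hA u v he hba'
    · rcases Relation.ReflTransGen.cases_tail hba with h | ⟨c, hvc, hcw⟩
      · exact hvw (by rw [← hb, ← h, ha])
      · have hcu : c = u := by
          rcases (subdivNet_edge_iff (M := M)).1 hcw with ⟨h3, -⟩ | ⟨-, h4⟩ | ⟨hm, -⟩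
          · exact h3
          · exact absurd (h4.symm.trans ha) hvw
          · exact absurd ha ((subdiv_fresh_edge hC hw hm).2)
        have hvu : M.Reaches (if b = w then v else b) (if c = w then v else c) :=
          reaches_map (fun x => if x = w then v else x) hlift hvc
        rw [hb, hcu, if_neg hvw, if_neg huw] at hvu
        exact hA u v he hvu
    · have hf1 : a ≠ w := (subdiv_fresh_edge hC hw hm).1
      have hf2 : b ≠ w := (subdiv_fresh_edge hC hw hm).2
      rw [if_neg hf2, if_neg hf1] at hba'
      exact hA _ _ hm hba'
  refine ⟨?_, hacy, ?_, ?_, ?_, ?_, ?_⟩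
  · -- closed
    rintro ⟨a, b⟩ hab
    rcases (subdivNet_edge_iff (M := M)).1 hab with ⟨ha, hb⟩ | ⟨ha, hb⟩ | ⟨hm, -⟩
    · exact ⟨by simp only [ha]; exact Finset.mem_insert_of_mem hu,
        by simp only [hb]; exact Finset.mem_insert_self _ _⟩
    · exact ⟨by simp only [ha]; exact Finset.mem_insert_self _ _,
        by simp only [hb]; exact Finset.mem_insert_of_mem hv⟩
    · exact ⟨Finset.mem_insert_of_mem (hC _ hm).1, Finset.mem_insert_of_mem (hC _ hm).2⟩
  · -- nopar
    intro p q r hpq hqr h1 h2 hpr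
    by_cases hqw : q = w
    · have hp : p = u := by
        rcases (subdivNet_edge_iff (M := M)).1 hpq with ⟨h3, -⟩ | ⟨-, h4⟩ | ⟨hm, -⟩
        · exact h3
        · exact absurd (h4.symm.trans hqw) hvw
        · exact absurd hqw ((subdiv_fresh_edge hC hw hm).2)
      have hr : r = v := by
        rcases (subdivNet_edge_iff (M := M)).1 hqr with ⟨h3, -⟩ | ⟨-, h4⟩ | ⟨hm, -⟩
        · exact absurd (h3.symm.trans hqw) huw
        · exact h4
        · exact absurd hqw ((subdiv_fresh_edge hC hw hm).1)
      rcases (subdivNet_edge_iff (M := M)).1 hpr with ⟨-, h4⟩ | ⟨h4, -⟩ | ⟨-, hn⟩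
      · exact hvw (hr.symm.trans h4)
      · exact huw (hp.symm.trans h4)
      · exact hn ⟨hp, hr⟩
    · have hdq1 : M.indeg q = 1 := by rw [din q, if_neg hqw] at h1; exact h1
      have hdq2 : M.outdeg q = 1 := by rw [dout q, if_neg hqw] at h2; exact h2
      rcases (subdivNet_edge_iff (M := M)).1 hpq with ⟨-, h4⟩ | ⟨hpw, hqv⟩ | ⟨hm1, -⟩
      · exact hqw h4
      · have hr : r = v := by
          rcases (subdivNet_edge_iff (M := M)).1 hpr with ⟨h3, -⟩ | ⟨-, h4⟩ | ⟨hm, -⟩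
          · exact absurd (hpw.symm.trans h3).symm huw
          · exact h4
          · exact absurd hpw ((subdiv_fresh_edge hC hw hm).1)
        rcases (subdivNet_edge_iff (M := M)).1 hqr with ⟨-, h4⟩ | ⟨h4, -⟩ | ⟨hm, -⟩
        · exact hvw (hr.symm.trans h4)
        · exact hvw (hqv.symm.trans h4)
        · exact acyc_ne hA hm (hqv.trans hr.symm)
      · rcases (subdivNet_edge_iff (M := M)).1 hqr with ⟨hqu, hrw⟩ | ⟨h4, -⟩ | ⟨hm2, -⟩
        · have hp : p = u := by
            rcases (subdivNet_edge_iff (M := M)).1 hpr with ⟨h3, -⟩ | ⟨-, h4⟩ | ⟨hm, -⟩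
            · exact h3
            · exact absurd (h4.symm.trans hrw) hvw
            · exact absurd hrw ((subdiv_fresh_edge hC hw hm).2)
          exact acyc_ne hA hm1 (hp.trans hqu.symm)
        · exact hqw h4
        · rcases (subdivNet_edge_iff (M := M)).1 hpr with ⟨-, h4⟩ | ⟨h4, -⟩ | ⟨hm3, -⟩
          · exact absurd h4 ((subdiv_fresh_edge hC hw hm2).2)
          · exact absurd h4 ((subdiv_fresh_edge hC hw hm1).1)
          · exact hg.nopar p q r hm1 hm2 hdq1 hdq2 hm3
  · exact fun x hx => Finset.mem_insert_of_mem (hg.verts_sub hx)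
  · intro x hx
    have hxw : x ≠ w := by rintro rfl; exact hw (hg.verts_sub hx)
    rw [din x, if_neg hxw, dout x, if_neg hxw]
    exact hg.deg_old x hx
  · intro x hx hnx
    by_cases hxw : x = w
    · subst hxw
      rw [din x, if_pos rfl, dout x, if_pos rfl]
      exact ⟨rfl, rfl⟩
    · rw [din x, if_neg hxw, dout x, if_neg hxw]
      rcases Finset.mem_insert.1 hx with h | h
      · exact absurd h hxw
      · exact hg.deg_new x h hnx
  · exact hg.lab_eq

lemma goodSub_of_subdiv {N' M : Net X} (hN' : N'.IsNetwork) (h : Subdivision N' M) :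
    GoodSub N' M := by
  induction h with
  | refl => exact goodSub_refl hN'
  | tail _ hstep ih => exact goodSub_step ih hstep

lemma subdiv_deg_pres {N' B C : Net X} (hN' : N'.IsNetwork) (h1 : Subdivision N' B)
    (h2 : Subdivision B C) :
    ∀ x ∈ B.verts, x ∈ C.verts ∧ C.indeg x = B.indeg x ∧ C.outdeg x = B.outdeg x := by
  induction h2 with
  | refl => exact fun x hx => ⟨hx, rfl, rfl⟩
  | @tail C₁ C₂ h2' hstep ih =>
    intro x hx
    obtain ⟨hxc, hi, ho⟩ := ih x hx
    have gs₁ := goodSub_of_subdiv hN' (h1.trans h2')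
    obtain ⟨u, v, w, he, hwf, rfl⟩ := subdivStep_iff hstep
    have hxw : x ≠ w := by rintro rfl; exact hwf hxc
    refine ⟨Finset.mem_insert_of_mem hxc, ?_, ?_⟩
    · rw [subdivNet_indeg gs₁.closed gs₁.acy he hwf x, if_neg hxw]; exact hi
    · rw [subdivNet_outdeg gs₁.closed gs₁.acy he hwf x, if_neg hxw]; exact ho

lemma subdiv_eq_of_no11 {N' M : Net X} (hN' : N'.IsNetwork) (h : Subdivision N' M)
    (hno : ∀ x ∈ M.verts, ¬(M.indeg x = 1 ∧ M.outdeg x = 1)) : M = N' := by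
  rcases Relation.ReflTransGen.cases_head h with heq | ⟨M₁, hstep, hsub⟩
  · exact heq.symm
  · exfalso
    obtain ⟨u, v, w, he, hwf, rfl⟩ := subdivStep_iff hstep
    have gs₀ := goodSub_refl hN'
    have hw1 : w ∈ (N'.subdivNet u v w).verts := Finset.mem_insert_self _ _
    have hiw : (N'.subdivNet u v w).indeg w = 1 := by
      rw [subdivNet_indeg gs₀.closed gs₀.acy he hwf w, if_pos rfl]
    have how : (N'.subdivNet u v w).outdeg w = 1 := by
      rw [subdivNet_outdeg gs₀.closed gs₀.acy he hwf w, if_pos rfl]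
    obtain ⟨hwm, hi, ho⟩ :=
      subdiv_deg_pres hN' (Relation.ReflTransGen.single hstep) hsub w hw1
    exact hno w hwm ⟨hi.trans hiw, ho.trans how⟩

end Net

namespace Net

variable {X : Type}

/-- The result of suppressing `v` (with in-neighbour `u`, out-neighbour `w`). -/
def suppNet (M : Net X) (u v w : ℕ) : Net X :=
  ⟨M.verts.erase v, insert (u, w) (M.edges.filter fun e => e.1 ≠ v ∧ e.2 ≠ v), M.lab⟩

lemma net_eq {A B : Net X} (h1 : A.verts = B.verts) (h2 : A.edges = B.edges)
    (h3 : A.lab = B.lab) : A = B := by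
  cases A; cases B; simp_all

/-- Un-subdividing a (1,1)-vertex of a subdivision yields a subdivision. -/
lemma unsub {N' M : Net X} (hN' : N'.IsNetwork) (h : Subdivision N' M) :
    ∀ q p s, M.indeg q = 1 → M.outdeg q = 1 → M.Edge p q → M.Edge q s →
      Subdivision N' (M.suppNet p q s) := by
  induction h with
  | refl =>
    intro q p s h1 h2 hp _
    exact absurd ⟨h1, h2⟩ (network_no11 hN' (hN'.1 _ hp).2)
  | @tail M₁ M₂ hsub hstep ih =>
    intro q p s h1 h2 hp hs
    obtain ⟨a, b, z, he, hz, rfl⟩ := subdivStep_iff hstep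
    have g₁ := goodSub_of_subdiv hN' hsub
    have hC := g₁.closed
    have hA := g₁.acy
    have ha : a ∈ M₁.verts := (hC _ he).1
    have hb : b ∈ M₁.verts := (hC _ he).2
    have haz : a ≠ z := by intro h3; exact hz (by rw [← h3]; exact ha)
    have hbz : b ≠ z := by intro h3; exact hz (by rw [← h3]; exact hb)
    have hab : a ≠ b := acyc_ne hA he
    have din := subdivNet_indeg hC hA he hz
    have dout := subdivNet_outdeg hC hA he hz
    by_cases hqz : q = z
    · have hpa : p = a := by
        rcases (subdivNet_edge_iff (M := M₁)).1 hp with ⟨h3, -⟩ | ⟨-, h4⟩ | ⟨hm, -⟩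
        · exact h3
        · exact absurd (h4.symm.trans hqz) hbz
        · exact absurd hqz ((subdiv_fresh_edge hC hz hm).2)
      have hsb : s = b := by
        rcases (subdivNet_edge_iff (M := M₁)).1 hs with ⟨h3, -⟩ | ⟨-, h4⟩ | ⟨hm, -⟩
        · exact absurd (h3.symm.trans hqz) haz
        · exact h4
        · exact absurd hqz ((subdiv_fresh_edge hC hz hm).1)
      rw [hpa, hqz, hsb]
      have hEQ : (M₁.subdivNet a b z).suppNet a z b = M₁ := by
        refine net_eq ?_ ?_ rfl
        · exact Finset.erase_insert hz
        · show insert (a, b) ((insert (a, z) (insert (z, b) (M₁.edges.erase (a, b)))).filter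
            fun e => e.1 ≠ z ∧ e.2 ≠ z) = M₁.edges
          rw [Finset.filter_insert, if_neg (fun hcon => hcon.2 rfl),
            Finset.filter_insert, if_neg (fun hcon => hcon.1 rfl), Finset.filter_erase]
          have h5 : (M₁.edges.filter fun e => e.1 ≠ z ∧ e.2 ≠ z) = M₁.edges :=
            Finset.filter_true_of_mem (fun e hme => subdiv_fresh_edge hC hz hme)
          rw [h5, Finset.insert_erase he]
      rw [hEQ]
      exact hsub
    · have hdq1 : M₁.indeg q = 1 := by rw [din q, if_neg hqz] at h1; exact h1
      have hdq2 : M₁.outdeg q = 1 := by rw [dout q, if_neg hqz] at h2; exact h2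
      rcases (subdivNet_edge_iff (M := M₁)).1 hp with ⟨-, h4⟩ | ⟨hpz, hqb⟩ | ⟨hmp, hnp⟩
      · exact absurd h4 hqz
      · -- case (i): p = z, q = b
        rw [hqb] at hdq1 hdq2 hs
        rw [hpz, hqb]
        have hsold : M₁.Edge b s := by
          rcases (subdivNet_edge_iff (M := M₁)).1 hs with ⟨h3, -⟩ | ⟨h4, -⟩ | ⟨hm, -⟩
          · exact absurd h3.symm hab
          · exact absurd h4 hbz
          · exact hm
        have ihQ := ih b a s hdq1 hdq2 he hsold
        have hQe : (M₁.suppNet a b s).Edge a s := Finset.mem_insert_self _ _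
        have hQz : z ∉ (M₁.suppNet a b s).verts := fun hmem =>
          hz (Finset.mem_of_mem_erase hmem)
        have hstep2 : SubdivStep (M₁.suppNet a b s) ((M₁.suppNet a b s).subdivNet a s z) :=
          SubdivStep.mk _ a s z hQe hQz
        have hEQ : (M₁.subdivNet a b z).suppNet z b s = (M₁.suppNet a b s).subdivNet a s z := by
          refine net_eq ?_ ?_ rfl
          · exact Finset.erase_insert_of_ne (Ne.symm hbz)
          · show insert (z, s) ((insert (a, z) (insert (z, b) (M₁.edges.erase (a, b)))).filter
                fun e => e.1 ≠ b ∧ e.2 ≠ b) =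
              insert (a, z) (insert (z, s)
                ((insert (a, s) (M₁.edges.filter fun e => e.1 ≠ b ∧ e.2 ≠ b)).erase (a, s)))
            rw [Finset.filter_insert, if_pos (⟨hab, Ne.symm hbz⟩ : (a,z).1 ≠ b ∧ (a,z).2 ≠ b),
              Finset.filter_insert, if_neg (fun hcon => hcon.2 rfl), Finset.filter_erase]
            have h5 : ((M₁.edges.filter fun e => e.1 ≠ b ∧ e.2 ≠ b)).erase (a, b) =
                M₁.edges.filter fun e => e.1 ≠ b ∧ e.2 ≠ b :=
              Finset.erase_eq_of_notMem (fun hmem => (Finset.mem_filter.1 hmem).2.2 rfl)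
            have h6 : (insert (a, s) (M₁.edges.filter fun e => e.1 ≠ b ∧ e.2 ≠ b)).erase (a, s) =
                M₁.edges.filter fun e => e.1 ≠ b ∧ e.2 ≠ b := by
              apply Finset.erase_insert
              intro hmem
              exact g₁.nopar a b s he hsold hdq1 hdq2 (Finset.mem_filter.1 hmem).1
            rw [h5, h6]
            exact Finset.insert_comm _ _ _
        rw [hEQ]
        exact Relation.ReflTransGen.tail ihQ hstep2
      · rcases (subdivNet_edge_iff (M := M₁)).1 hs with ⟨hqa, hsz⟩ | ⟨h4, -⟩ | ⟨hms, hns⟩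
        · -- case (ii): q = a, s = z
          rw [hqa] at hdq1 hdq2 hmp
          rw [hqa, hsz]
          have ihQ := ih a p b hdq1 hdq2 hmp he
          have hQe : (M₁.suppNet p a b).Edge p b := Finset.mem_insert_self _ _
          have hQz : z ∉ (M₁.suppNet p a b).verts := fun hmem =>
            hz (Finset.mem_of_mem_erase hmem)
          have hstep2 : SubdivStep (M₁.suppNet p a b) ((M₁.suppNet p a b).subdivNet p b z) :=
            SubdivStep.mk _ p b z hQe hQz
          have hEQ : (M₁.subdivNet a b z).suppNet p a z = (M₁.suppNet p a b).subdivNet p b z := by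
            refine net_eq ?_ ?_ rfl
            · exact Finset.erase_insert_of_ne (Ne.symm haz)
            · show insert (p, z) ((insert (a, z) (insert (z, b) (M₁.edges.erase (a, b)))).filter
                  fun e => e.1 ≠ a ∧ e.2 ≠ a) =
                insert (p, z) (insert (z, b)
                  ((insert (p, b) (M₁.edges.filter fun e => e.1 ≠ a ∧ e.2 ≠ a)).erase (p, b)))
              rw [Finset.filter_insert, if_neg (fun hcon => hcon.1 rfl),
                Finset.filter_insert,
                if_pos (⟨Ne.symm haz, Ne.symm hab⟩ : (z,b).1 ≠ a ∧ (z,b).2 ≠ a),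
                Finset.filter_erase]
              have h5 : ((M₁.edges.filter fun e => e.1 ≠ a ∧ e.2 ≠ a)).erase (a, b) =
                  M₁.edges.filter fun e => e.1 ≠ a ∧ e.2 ≠ a :=
                Finset.erase_eq_of_notMem (fun hmem => (Finset.mem_filter.1 hmem).2.1 rfl)
              have h6 : (insert (p, b) (M₁.edges.filter fun e => e.1 ≠ a ∧ e.2 ≠ a)).erase (p, b) =
                  M₁.edges.filter fun e => e.1 ≠ a ∧ e.2 ≠ a := by
                apply Finset.erase_insert
                intro hmem
                exact g₁.nopar p a b hmp he hdq1 hdq2 (Finset.mem_filter.1 hmem).1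
              rw [h5, h6]
          rw [hEQ]
          exact Relation.ReflTransGen.tail ihQ hstep2
        · exact absurd h4 hqz
        · -- case (iii)
          have hqa : q ≠ a := fun h3 =>
            hns ⟨h3, outdeg_unique (le_of_eq hdq2) hms (show M₁.Edge q b by rw [h3]; exact he)⟩
          have hqb' : q ≠ b := fun h3 =>
            hnp ⟨indeg_unique (le_of_eq (show M₁.indeg b = 1 by rw [← h3]; exact hdq1))
              (show M₁.Edge p b by rw [← h3]; exact hmp) he, h3⟩
          have hqm : q ∈ M₁.verts := (hC _ hmp).2
          have hzq : z ≠ q := fun h3 => hz (by rw [h3]; exact hqm)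
          have ihQ := ih q p s hdq1 hdq2 hmp hms
          have hQe : (M₁.suppNet p q s).Edge a b :=
            Finset.mem_insert_of_mem (Finset.mem_filter.2 ⟨he, Ne.symm hqa, Ne.symm hqb'⟩)
          have hQz : z ∉ (M₁.suppNet p q s).verts := fun hmem =>
            hz (Finset.mem_of_mem_erase hmem)
          have hstep2 : SubdivStep (M₁.suppNet p q s) ((M₁.suppNet p q s).subdivNet a b z) :=
            SubdivStep.mk _ a b z hQe hQz
          have hEQ : (M₁.subdivNet a b z).suppNet p q s = (M₁.suppNet p q s).subdivNet a b z := by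
            refine net_eq ?_ ?_ rfl
            · exact Finset.erase_insert_of_ne hzq
            · show insert (p, s) ((insert (a, z) (insert (z, b) (M₁.edges.erase (a, b)))).filter
                  fun e => e.1 ≠ q ∧ e.2 ≠ q) =
                insert (a, z) (insert (z, b)
                  ((insert (p, s) (M₁.edges.filter fun e => e.1 ≠ q ∧ e.2 ≠ q)).erase (a, b)))
              rw [Finset.filter_insert, if_pos (⟨Ne.symm hqa, hzq⟩ : (a,z).1 ≠ q ∧ (a,z).2 ≠ q),
                Finset.filter_insert, if_pos (⟨hzq, Ne.symm hqb'⟩ : (z,b).1 ≠ q ∧ (z,b).2 ≠ q),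
                Finset.filter_erase]
              have h7 : (insert (p, s) (M₁.edges.filter fun e => e.1 ≠ q ∧ e.2 ≠ q)).erase (a, b) =
                  insert (p, s) (((M₁.edges.filter fun e => e.1 ≠ q ∧ e.2 ≠ q)).erase (a, b)) := by
                apply Finset.erase_insert_of_ne
                intro h3
                exact g₁.nopar p q s hmp hms hdq1 hdq2 (show (p, s) ∈ M₁.edges by rw [h3]; exact he)
              rw [h7, Finset.insert_comm (p, s) (a, z), Finset.insert_comm (p, s) (z, b)]
          rw [hEQ]
          exact Relation.ReflTransGen.tail ihQ hstep2

end Net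

namespace Net

variable {X : Type}

def liveP (P : Net X) (v : ℕ) : Prop := ∃ l, (∃ x, P.lab l = some x) ∧ P.Reaches v l

def LiveNet (P : Net X) : Net X :=
  ⟨P.verts.filter (fun v => P.liveP v), P.edges.filter (fun e => P.liveP e.1 ∧ P.liveP e.2),
    P.lab⟩

lemma liveNet_closed {P : Net X} (hC : P.Closed) : P.LiveNet.Closed := by
  rintro e he
  rw [LiveNet, Finset.mem_filter] at he
  exact ⟨Finset.mem_filter.2 ⟨(hC _ he.1).1, he.2.1⟩,
    Finset.mem_filter.2 ⟨(hC _ he.1).2, he.2.2⟩⟩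

lemma not_live {P : Net X} {v} (hlab : P.lab v = none) (h0 : P.outdeg v = 0) :
    ¬ P.liveP v := by
  rintro ⟨l, ⟨x, hx⟩, hr⟩
  rcases Relation.ReflTransGen.cases_head hr with rfl | ⟨c, hc, -⟩
  · rw [hlab] at hx; cases hx
  · have := edge_outdeg_pos hc; omega

lemma live_child {P : Net X} {v} (hv : P.liveP v) (hlab : P.lab v = none) :
    ∃ c, P.Edge v c ∧ P.liveP c := by
  obtain ⟨l, hl, hr⟩ := hv
  rcases Relation.ReflTransGen.cases_head hr with rfl | ⟨c, hc, hcl⟩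
  · obtain ⟨x, hx⟩ := hl; rw [hlab] at hx; cases hx
  · exact ⟨c, hc, l, hl, hcl⟩

lemma live_parent {P : Net X} {u v} (he : P.Edge u v) (hv : P.liveP v) : P.liveP u := by
  obtain ⟨l, hl, hr⟩ := hv
  exact ⟨l, hl, he.reach.trans hr⟩

lemma iso_outdeg {A B : Net X} {f : ℕ → ℕ} (hC : A.Closed) (hD : B.Closed)
    (hb : Set.BijOn f ↑A.verts ↑B.verts)
    (he : ∀ u ∈ A.verts, ∀ v ∈ A.verts, (A.Edge u v ↔ B.Edge (f u) (f v)))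
    {v : ℕ} (hv : v ∈ A.verts) : A.outdeg v = B.outdeg (f v) := by
  unfold outdeg
  apply Finset.card_bij (fun e _ => (f e.1, f e.2))
  · rintro ⟨a, b⟩ hab
    rw [Finset.mem_filter] at hab ⊢
    obtain ⟨hmem, hb1⟩ := hab
    simp only at hb1; subst hb1
    exact ⟨(he _ (hC _ hmem).1 _ (hC _ hmem).2).1 hmem, rfl⟩
  · rintro ⟨a, b⟩ hab ⟨a', b'⟩ hab' heq
    rw [Finset.mem_filter] at hab hab'
    simp only [Prod.mk.injEq] at heq
    have h1 := hb.injOn (Finset.mem_coe.2 (hC _ hab.1).1) (Finset.mem_coe.2 (hC _ hab'.1).1) heq.1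
    have h2 := hb.injOn (Finset.mem_coe.2 (hC _ hab.1).2) (Finset.mem_coe.2 (hC _ hab'.1).2) heq.2
    exact Prod.ext h1 h2
  · rintro ⟨a, b⟩ hab
    rw [Finset.mem_filter] at hab
    obtain ⟨hmem, hb1⟩ := hab
    simp only at hb1; subst hb1
    obtain ⟨b', hb', hfb⟩ := hb.surjOn (hD _ hmem).2
    refine ⟨(v, b'), Finset.mem_filter.2 ⟨?_, rfl⟩, by simp [hfb]⟩
    exact (he _ hv _ (Finset.mem_coe.1 hb')).2 (show B.Edge (f v) (f b') by rw [hfb]; exact hmem)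

lemma acyc_mono {P Q : Net X} (h : ∀ a b, Q.Edge a b → P.Edge a b) (hA : P.Acyc) : Q.Acyc :=
  fun a b e r => hA a b (h _ _ e) (reaches_mono h r)

lemma outdeg_mono {P Q : Net X} (h : Q.edges ⊆ P.edges) (x : ℕ) : Q.outdeg x ≤ P.outdeg x :=
  Finset.card_le_card (Finset.filter_subset_filter _ h)

/-- Paths avoiding a vertex that cannot reach the target. -/
lemma reaches_avoid {P : Net X} {v x l : ℕ} (hr : P.Reaches x l) (hnv : ¬ P.Reaches v l) :
    Relation.ReflTransGen (fun a b => (a, b) ∈ P.edges.filter fun e => e.1 ≠ v ∧ e.2 ≠ v) x l := by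
  induction hr using Relation.ReflTransGen.head_induction_on with
  | refl => exact Relation.ReflTransGen.refl
  | head hac hcl ih =>
    rename_i a c
    have hav : a ≠ v := by rintro rfl; exact hnv (hac.reach.trans hcl)
    have hcv : c ≠ v := by rintro rfl; exact hnv hcl
    exact Relation.ReflTransGen.head (Finset.mem_filter.2 ⟨hac, hav, hcv⟩) ih

lemma del_live_iff {P : Net X} {v} (hdead : ¬ P.liveP v) (x : ℕ) :
    (P.deleteNode v).liveP x ↔ P.liveP x := by
  constructor
  · rintro ⟨l, hl, hr⟩
    refine ⟨l, hl, reaches_mono ?_ hr⟩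
    intro a b hab
    exact (Finset.mem_filter.1 hab).1
  · rintro ⟨l, hl, hr⟩
    have hnv : ¬ P.Reaches v l := fun hvl => hdead ⟨l, hl, hvl⟩
    exact ⟨l, hl, reaches_avoid hr hnv⟩

lemma liveNet_del {P : Net X} {v} (hv : v ∈ P.verts) (h0 : P.outdeg v = 0)
    (hlab : P.lab v = none) : (P.deleteNode v).LiveNet = P.LiveNet := by
  have hdead : ¬ P.liveP v := not_live hlab h0
  refine net_eq ?_ ?_ rfl
  · apply Finset.ext
    intro x
    simp only [LiveNet, Finset.mem_filter]; simp only [deleteNode, Finset.mem_erase]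
    constructor
    · rintro ⟨⟨hxv, hxm⟩, hlx⟩
      exact ⟨hxm, (del_live_iff hdead x).1 hlx⟩
    · rintro ⟨hxm, hlx⟩
      have hxv : x ≠ v := by rintro rfl; exact hdead hlx
      exact ⟨⟨hxv, hxm⟩, (del_live_iff hdead x).2 hlx⟩
  · apply Finset.ext
    rintro ⟨a, b⟩
    simp only [LiveNet, Finset.mem_filter]; simp only [deleteNode, Finset.mem_filter]
    constructor
    · rintro ⟨⟨hm, -⟩, h1, h2⟩
      exact ⟨hm, (del_live_iff hdead a).1 h1, (del_live_iff hdead b).1 h2⟩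
    · rintro ⟨hm, h1, h2⟩
      have hav : a ≠ v := by rintro rfl; exact hdead h1
      have hbv : b ≠ v := by rintro rfl; exact hdead h2
      exact ⟨⟨hm, hav, hbv⟩, (del_live_iff hdead a).2 h1, (del_live_iff hdead b).2 h2⟩

end Net

namespace Net

variable {X : Type}

section Supp

variable {P : Net X} {u v w : ℕ} (hC : P.Closed) (hA : P.Acyc)
  (h1 : P.indeg v = 1) (h2 : P.outdeg v = 1) (hu : P.Edge u v) (hw : P.Edge v w)
  (hlab : ∀ y, (∃ x, P.lab y = some x) → P.outdeg y = 0)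

include hu hw

lemma supp_lift : ∀ a b, (P.suppNet u v w).Edge a b → P.Reaches a b := by
  intro a b hab
  rcases Finset.mem_insert.1 hab with heq | hm
  · rw [Prod.mk.injEq] at heq
    rw [heq.1, heq.2]
    exact hu.reach.trans hw.reach
  · exact Edge.reach (Finset.mem_filter.1 hm).1

include hA h1 h2 in
lemma supp_reaches {x l : ℕ} (hl : l ≠ v) (hr : P.Reaches x l) :
    (x ≠ v → (P.suppNet u v w).Reaches x l) ∧ (x = v → (P.suppNet u v w).Reaches w l) := by
  induction hr using Relation.ReflTransGen.head_induction_on with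
  | refl => exact ⟨fun _ => Relation.ReflTransGen.refl, fun hlv => absurd hlv hl⟩
  | head hac hcl ih =>
    rename_i a c
    refine ⟨?_, ?_⟩
    · intro hav
      by_cases hcv : c = v
      · have hau : a = u :=
          indeg_unique (le_of_eq h1) (show P.Edge a v by rw [← hcv]; exact hac) hu
        refine Relation.ReflTransGen.head
          (show (P.suppNet u v w).Edge a w by
            rw [hau]; exact Finset.mem_insert_self _ _) (ih.2 hcv)
      · exact Relation.ReflTransGen.head
          (Finset.mem_insert_of_mem (Finset.mem_filter.2 ⟨hac, hav, hcv⟩)) (ih.1 hcv)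
    · intro hav
      have hcw : c = w := outdeg_unique (le_of_eq h2) (show P.Edge v c by rw [← hav]; exact hac) hw
      have hcv : c ≠ v := by rw [hcw]; exact Ne.symm (acyc_ne hA hw)
      have := ih.1 hcv
      rw [hcw] at this
      exact this

include hA h1 h2 hlab in
lemma supp_live_iff {x : ℕ} (hxv : x ≠ v) :
    (P.suppNet u v w).liveP x ↔ P.liveP x := by
  constructor
  · rintro ⟨l, hl, hr⟩
    exact ⟨l, hl, reaches_lift (supp_lift hu hw) hr⟩
  · rintro ⟨l, hl, hr⟩
    have hlv : l ≠ v := by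
      rintro rfl
      have := hlab l hl
      omega
    exact ⟨l, hl, (supp_reaches hA h1 h2 hu hw hlv hr).1 hxv⟩

include hA h1 h2 hlab in
lemma liveNet_supp_dead (hdead : ¬ P.liveP v) :
    (P.suppNet u v w).LiveNet = P.LiveNet := by
  have hwd : ¬ P.liveP w := fun hlw => hdead (live_parent hw hlw)
  refine net_eq ?_ ?_ rfl
  · apply Finset.ext
    intro x
    simp only [LiveNet, Finset.mem_filter]; simp only [suppNet, Finset.mem_erase]
    constructor
    · rintro ⟨⟨hxv, hxm⟩, hlx⟩
      exact ⟨hxm, (supp_live_iff hA h1 h2 hu hw hlab hxv).1 hlx⟩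
    · rintro ⟨hxm, hlx⟩
      have hxv : x ≠ v := by rintro rfl; exact hdead hlx
      exact ⟨⟨hxv, hxm⟩, (supp_live_iff hA h1 h2 hu hw hlab hxv).2 hlx⟩
  · apply Finset.ext
    rintro ⟨a, b⟩
    simp only [LiveNet, Finset.mem_filter]; simp only [suppNet, Finset.mem_filter, Finset.mem_insert, Prod.mk.injEq]
    constructor
    · rintro ⟨⟨ha, hb⟩ | hm, hl1, hl2⟩
      · exfalso
        have hbv : b ≠ w → False := fun h => h hb
        have hwv : w ≠ v := Ne.symm (acyc_ne hA hw)
        have := (supp_live_iff hA h1 h2 hu hw hlab (by rw [hb]; exact hwv)).1 hl2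
        rw [hb] at this
        exact hwd this
      · obtain ⟨hm', hav, hbv⟩ := hm
        exact ⟨hm', (supp_live_iff hA h1 h2 hu hw hlab hav).1 hl1,
          (supp_live_iff hA h1 h2 hu hw hlab hbv).1 hl2⟩
    · rintro ⟨hm, hl1, hl2⟩
      have hav : a ≠ v := by rintro rfl; exact hdead hl1
      have hbv : b ≠ v := by rintro rfl; exact hdead hl2
      exact ⟨Or.inr ⟨hm, hav, hbv⟩,
        (supp_live_iff hA h1 h2 hu hw hlab hav).2 hl1,
        (supp_live_iff hA h1 h2 hu hw hlab hbv).2 hl2⟩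

include hA h1 h2 hlab in
lemma liveNet_supp_live (hlive : P.liveP v) :
    (P.suppNet u v w).LiveNet = (P.LiveNet).suppNet u v w := by
  have hlabv : P.lab v = none := by
    cases hv : P.lab v with
    | none => rfl
    | some x => have := hlab v ⟨x, hv⟩; omega
  have hlw : P.liveP w := by
    obtain ⟨c, hc, hlc⟩ := live_child hlive hlabv
    have : c = w := outdeg_unique (le_of_eq h2) hc hw
    rw [← this]; exact hlc
  have hlu : P.liveP u := live_parent hu hlive
  have huv : u ≠ v := acyc_ne hA hu
  have hwv : w ≠ v := Ne.symm (acyc_ne hA hw)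
  refine net_eq ?_ ?_ rfl
  · apply Finset.ext
    intro x
    simp only [LiveNet, Finset.mem_filter]; simp only [suppNet, Finset.mem_erase, Finset.mem_filter]
    constructor
    · rintro ⟨⟨hxv, hxm⟩, hlx⟩
      exact ⟨hxv, hxm, (supp_live_iff hA h1 h2 hu hw hlab hxv).1 hlx⟩
    · rintro ⟨hxv, hxm, hlx⟩
      exact ⟨⟨hxv, hxm⟩, (supp_live_iff hA h1 h2 hu hw hlab hxv).2 hlx⟩
  · apply Finset.ext
    rintro ⟨a, b⟩
    simp only [LiveNet, Finset.mem_filter]; simp only [suppNet, Finset.mem_filter, Finset.mem_insert, Prod.mk.injEq]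
    constructor
    · rintro ⟨⟨ha, hb⟩ | hm, hl1, hl2⟩
      · exact Or.inl ⟨ha, hb⟩
      · obtain ⟨hm', hav, hbv⟩ := hm
        exact Or.inr ⟨⟨hm', (supp_live_iff hA h1 h2 hu hw hlab hav).1 hl1,
            (supp_live_iff hA h1 h2 hu hw hlab hbv).1 hl2⟩, hav, hbv⟩
    · rintro (⟨ha, hb⟩ | hm)
      · refine ⟨Or.inl ⟨ha, hb⟩, ?_, ?_⟩
        · rw [ha]; exact (supp_live_iff hA h1 h2 hu hw hlab huv).2 hlu
        · rw [hb]; exact (supp_live_iff hA h1 h2 hu hw hlab hwv).2 hlw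
      · obtain ⟨⟨hm'', hla, hlb⟩, hav, hbv⟩ := hm
        exact ⟨Or.inr ⟨hm'', hav, hbv⟩,
          (supp_live_iff hA h1 h2 hu hw hlab hav).2 hla,
          (supp_live_iff hA h1 h2 hu hw hlab hbv).2 hlb⟩

include h1 in
lemma liveNet_indeg_v (hlive : P.liveP v) : (P.LiveNet).indeg v = 1 := by
  have hlu : P.liveP u := live_parent hu hlive
  have hfe : ((P.LiveNet).edges.filter fun e => e.2 = v) = {(u, v)} := by
    apply Finset.ext
    rintro ⟨a, b⟩
    simp only [LiveNet, Finset.mem_filter, Finset.mem_singleton, Prod.mk.injEq]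
    constructor
    · rintro ⟨⟨hm, -, -⟩, hb⟩
      refine ⟨indeg_unique (le_of_eq h1) (show P.Edge a v by rw [← hb]; exact hm) hu, hb⟩
    · rintro ⟨ha, hb⟩
      rw [ha, hb]
      exact ⟨⟨hu, hlu, hlive⟩, rfl⟩
  rw [indeg, hfe, Finset.card_singleton]

include h2 hlab in
lemma liveNet_outdeg_v (hlive : P.liveP v) : (P.LiveNet).outdeg v = 1 := by
  have hlabv : P.lab v = none := by
    cases hv : P.lab v with
    | none => rfl
    | some x => have := hlab v ⟨x, hv⟩; omega
  have hlw : P.liveP w := by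
    obtain ⟨c, hc, hlc⟩ := live_child hlive hlabv
    have : c = w := outdeg_unique (le_of_eq h2) hc hw
    rw [← this]; exact hlc
  have hfe : ((P.LiveNet).edges.filter fun e => e.1 = v) = {(v, w)} := by
    apply Finset.ext
    rintro ⟨a, b⟩
    simp only [LiveNet, Finset.mem_filter, Finset.mem_singleton, Prod.mk.injEq]
    constructor
    · rintro ⟨⟨hm, -, -⟩, ha⟩
      refine ⟨ha, outdeg_unique (le_of_eq h2) (show P.Edge v b by rw [← ha]; exact hm) hw⟩
    · rintro ⟨ha, hb⟩
      rw [ha, hb]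
      exact ⟨⟨hw, hlive, hlw⟩, rfl⟩
  rw [outdeg, hfe, Finset.card_singleton]

lemma liveNet_edge_uv (hlive : P.liveP v) : (P.LiveNet).Edge u v :=
  Finset.mem_filter.2 ⟨hu, live_parent hu hlive, hlive⟩

include h2 hlab in
lemma liveNet_edge_vw (hlive : P.liveP v) : (P.LiveNet).Edge v w := by
  have hlabv : P.lab v = none := by
    cases hv : P.lab v with
    | none => rfl
    | some x => have := hlab v ⟨x, hv⟩; omega
  have hlw : P.liveP w := by
    obtain ⟨c, hc, hlc⟩ := live_child hlive hlabv
    have : c = w := outdeg_unique (le_of_eq h2) hc hw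
    rw [← this]; exact hlc
  exact Finset.mem_filter.2 ⟨hw, hlive, hlw⟩

end Supp

end Net

namespace Net

variable {X : Type}

def Invar (N' P : Net X) : Prop :=
  P.Closed ∧ P.Acyc ∧ (∀ y, (∃ x, P.lab y = some x) → P.outdeg y = 0) ∧
  ∃ M'', Subdivision N' M'' ∧ Iso M'' P.LiveNet

lemma iso_suppNet {A B : Net X} {f : ℕ → ℕ} {u'' v'' w'' u v w : ℕ}
    (hbij : Set.BijOn f ↑A.verts ↑B.verts)
    (hef : ∀ x ∈ A.verts, ∀ y ∈ A.verts, (A.Edge x y ↔ B.Edge (f x) (f y)))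
    (hlf : ∀ x ∈ A.verts, A.lab x = B.lab (f x))
    (hu'' : u'' ∈ A.verts) (hv'' : v'' ∈ A.verts) (hw'' : w'' ∈ A.verts)
    (hfu : f u'' = u) (hfv : f v'' = v) (hfw : f w'' = w) :
    Iso (A.suppNet u'' v'' w'') (B.suppNet u v w) := by
  refine ⟨f, ⟨?_, hbij.injOn.mono (Finset.coe_subset.mpr (Finset.erase_subset _ _)), ?_⟩, ?_, ?_⟩
  · -- mapsTo
    intro x hx
    rw [Finset.mem_coe, suppNet, Finset.mem_erase] at hx
    obtain ⟨hxv, hxm⟩ := hx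
    rw [Finset.mem_coe, suppNet, Finset.mem_erase]
    refine ⟨?_, hbij.mapsTo (Finset.mem_coe.2 hxm)⟩
    intro hcon
    exact hxv (hbij.injOn (Finset.mem_coe.2 hxm) (Finset.mem_coe.2 hv'') (hcon.trans hfv.symm))
  · -- surjOn
    intro y hy
    rw [Finset.mem_coe, suppNet, Finset.mem_erase] at hy
    obtain ⟨hyv, hym⟩ := hy
    obtain ⟨x, hx, hfx⟩ := hbij.surjOn (Finset.mem_coe.2 hym)
    refine ⟨x, ?_, hfx⟩
    rw [Finset.mem_coe, suppNet, Finset.mem_erase]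
    refine ⟨?_, Finset.mem_coe.1 hx⟩
    rintro rfl
    exact hyv (hfx.symm.trans hfv)
  · -- edges
    intro x hx y hy
    rw [suppNet, Finset.mem_erase] at hx hy
    obtain ⟨hxv, hxm⟩ := hx
    obtain ⟨hyv, hym⟩ := hy
    have hfxv : f x ≠ v := fun hcon =>
      hxv (hbij.injOn (Finset.mem_coe.2 hxm) (Finset.mem_coe.2 hv'') (hcon.trans hfv.symm))
    have hfyv : f y ≠ v := fun hcon =>
      hyv (hbij.injOn (Finset.mem_coe.2 hym) (Finset.mem_coe.2 hv'') (hcon.trans hfv.symm))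
    constructor
    · intro hxy
      rcases Finset.mem_insert.1 hxy with heq | hm
      · rw [Prod.mk.injEq] at heq
        apply Finset.mem_insert.2
        left
        rw [Prod.mk.injEq, heq.1, heq.2, hfu, hfw]
        exact ⟨rfl, rfl⟩
      · obtain ⟨hm', -, -⟩ := Finset.mem_filter.1 hm
        exact Finset.mem_insert.2 (Or.inr (Finset.mem_filter.2
          ⟨(hef _ hxm _ hym).1 hm', hfxv, hfyv⟩))
    · intro hxy
      rcases Finset.mem_insert.1 hxy with heq | hm
      · rw [Prod.mk.injEq] at heq
        apply Finset.mem_insert.2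
        left
        rw [Prod.mk.injEq]
        constructor
        · exact hbij.injOn (Finset.mem_coe.2 hxm) (Finset.mem_coe.2 hu'') (heq.1.trans hfu.symm)
        · exact hbij.injOn (Finset.mem_coe.2 hym) (Finset.mem_coe.2 hw'') (heq.2.trans hfw.symm)
      · obtain ⟨hm', -, -⟩ := Finset.mem_filter.1 hm
        exact Finset.mem_insert.2 (Or.inr (Finset.mem_filter.2
          ⟨(hef _ hxm _ hym).2 hm', hxv, hyv⟩))
  · intro x hx
    rw [suppNet, Finset.mem_erase] at hx
    exact hlf x hx.2

end Net

namespace Net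

variable {X : Type}

lemma clean_pres {N' P P₂ : Net X} (hN' : N'.IsNetwork) (hI : Invar N' P)
    (hs : CleanStep P P₂) :
    Invar N' P₂ ∧ P₂.verts.card + P₂.edges.card < P.verts.card + P.edges.card := by
  obtain ⟨hC, hA, hlab, M'', hsubM, hiso⟩ := hI
  cases hs with
  | delNode v hv h0 hl =>
    refine ⟨⟨?_, ?_, ?_, ?_⟩, ?_⟩
    · rintro e he
      obtain ⟨hm, hne1, hne2⟩ := Finset.mem_filter.1 he
      exact ⟨Finset.mem_erase.2 ⟨hne1, (hC _ hm).1⟩, Finset.mem_erase.2 ⟨hne2, (hC _ hm).2⟩⟩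
    · exact acyc_mono (fun a b hab => (Finset.mem_filter.1 hab).1) hA
    · intro y hy
      have h5 := outdeg_mono (show (P.deleteNode v).edges ⊆ P.edges from Finset.filter_subset _ _) y
      have h6 := hlab y hy
      omega
    · refine ⟨M'', hsubM, ?_⟩
      rw [liveNet_del hv h0 hl]
      exact hiso
    · have h5 := Finset.card_erase_of_mem hv
      have h6 := Finset.card_filter_le P.edges (fun e => e.1 ≠ v ∧ e.2 ≠ v)
      have h7 : 0 < P.verts.card := Finset.card_pos.2 ⟨v, hv⟩
      simp only [deleteNode]
      omega
  | suppress u v w h1 h2 hu hw =>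
    have hv : v ∈ P.verts := (hC _ hu).2
    have hum : u ∈ P.verts := (hC _ hu).1
    have hwm : w ∈ P.verts := (hC _ hw).2
    have huv : u ≠ v := acyc_ne hA hu
    have hvw : v ≠ w := acyc_ne hA hw
    have goal1 : Invar N' (P.suppNet u v w) := by
      refine ⟨?_, ?_, ?_, ?_⟩
      · rintro ⟨a, b⟩ he
        rcases Finset.mem_insert.1 he with heq | hm
        · rw [Prod.mk.injEq] at heq
          constructor
          · show a ∈ P.verts.erase v
            rw [heq.1]; exact Finset.mem_erase.2 ⟨huv, hum⟩
          · show b ∈ P.verts.erase v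
            rw [heq.2]; exact Finset.mem_erase.2 ⟨Ne.symm hvw, hwm⟩
        · obtain ⟨hm', ha, hb⟩ := Finset.mem_filter.1 hm
          exact ⟨Finset.mem_erase.2 ⟨ha, (hC _ hm').1⟩, Finset.mem_erase.2 ⟨hb, (hC _ hm').2⟩⟩
      · intro a b hab hba
        have hba' : P.Reaches b a := reaches_lift (supp_lift hu hw) hba
        rcases Finset.mem_insert.1 hab with heq | hm
        · rw [Prod.mk.injEq] at heq
          rw [heq.1, heq.2] at hba'
          exact hA u v hu (hw.reach.trans hba')
        · exact hA a b (Finset.mem_filter.1 hm).1 hba'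
      · intro y hy
        have h0 := hlab y hy
        have hfe : ((insert (u, w) (P.edges.filter fun e => e.1 ≠ v ∧ e.2 ≠ v)).filter
            fun e => e.1 = y) = ∅ := by
          rw [Finset.filter_eq_empty_iff]
          intro e he'
          rcases Finset.mem_insert.1 he' with heq | hm
          · rw [heq]
            intro hcon
            have h5 := edge_outdeg_pos hu
            rw [show u = y from hcon] at h5
            omega
          · intro hcon
            have hm' := (Finset.mem_filter.1 hm).1
            have h5 := edge_outdeg_pos (show P.Edge e.1 e.2 by rw [Edge, Prod.mk.eta]; exact hm')
            rw [hcon] at h5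
            omega
        show ((insert (u, w) (P.edges.filter fun e => e.1 ≠ v ∧ e.2 ≠ v)).filter
          fun e => e.1 = y).card = 0
        rw [hfe]
        rfl
      · by_cases hlive : P.liveP v
        · obtain ⟨f, hbij, hef, hlf⟩ := hiso
          have gs := goodSub_of_subdiv hN' hsubM
          have hLC := liveNet_closed hC
          have hvL : v ∈ (P.LiveNet).verts := Finset.mem_filter.2 ⟨hv, hlive⟩
          have huL : u ∈ (P.LiveNet).verts :=
            Finset.mem_filter.2 ⟨hum, live_parent hu hlive⟩
          have hwL : w ∈ (P.LiveNet).verts := by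
            have := liveNet_edge_vw h2 hu hw hlab hlive
            exact (hLC _ this).2
          obtain ⟨v'', hv''c, hfv⟩ := hbij.surjOn (Finset.mem_coe.2 hvL)
          obtain ⟨u'', hu''c, hfu⟩ := hbij.surjOn (Finset.mem_coe.2 huL)
          obtain ⟨w'', hw''c, hfw⟩ := hbij.surjOn (Finset.mem_coe.2 hwL)
          have hv''m : v'' ∈ M''.verts := Finset.mem_coe.1 hv''c
          have hu''m : u'' ∈ M''.verts := Finset.mem_coe.1 hu''c
          have hw''m : w'' ∈ M''.verts := Finset.mem_coe.1 hw''c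
          have hdeg1 : M''.indeg v'' = 1 := by
            have := iso_indeg gs.closed hLC hbij hef hv''m
            rw [hfv, liveNet_indeg_v h1 hu hw hlive] at this
            exact this
          have hdeg2 : M''.outdeg v'' = 1 := by
            have := iso_outdeg gs.closed hLC hbij hef hv''m
            rw [hfv, liveNet_outdeg_v h2 hu hw hlab hlive] at this
            exact this
          have hEuv : M''.Edge u'' v'' := by
            refine (hef _ hu''m _ hv''m).2 ?_
            rw [hfu, hfv]
            exact liveNet_edge_uv hu hw hlive
          have hEvw : M''.Edge v'' w'' := by
            refine (hef _ hv''m _ hw''m).2 ?_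
            rw [hfv, hfw]
            exact liveNet_edge_vw h2 hu hw hlab hlive
          refine ⟨M''.suppNet u'' v'' w'', unsub hN' hsubM v'' u'' w'' hdeg1 hdeg2 hEuv hEvw, ?_⟩
          rw [liveNet_supp_live hA h1 h2 hu hw hlab hlive]
          exact iso_suppNet hbij hef hlf hu''m hv''m hw''m hfu hfv hfw
        · refine ⟨M'', hsubM, ?_⟩
          rw [liveNet_supp_dead hA h1 h2 hu hw hlab hlive]
          exact hiso
    refine ⟨goal1, ?_⟩
    have h5 := Finset.card_erase_of_mem hv
    have h7 : 0 < P.verts.card := Finset.card_pos.2 ⟨v, hv⟩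
    have hvwne : (v, w) ∈ P.edges.erase (u, v) := by
      refine Finset.mem_erase.2 ⟨?_, hw⟩
      intro hcon
      exact hvw.symm (congrArg Prod.snd hcon)
    have hsub2 : (P.edges.filter fun e => e.1 ≠ v ∧ e.2 ≠ v) ⊆
        (P.edges.erase (u, v)).erase (v, w) := by
      intro e he
      obtain ⟨hm, ha, hb⟩ := Finset.mem_filter.1 he
      refine Finset.mem_erase.2 ⟨?_, Finset.mem_erase.2 ⟨?_, hm⟩⟩
      · intro hcon; exact ha (by rw [hcon])
      · intro hcon; exact hb (by rw [hcon])
    have h8 := Finset.card_le_card hsub2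
    have h9 := Finset.card_erase_of_mem hvwne
    have h10 := Finset.card_erase_of_mem (hu : (u, v) ∈ P.edges)
    have h11 := Finset.card_insert_le (u, w) (P.edges.filter fun e => e.1 ≠ v ∧ e.2 ≠ v)
    have h12 : 0 < P.edges.card := Finset.card_pos.2 ⟨_, hu⟩
    show (P.verts.erase v).card +
      (insert (u, w) (P.edges.filter fun e => e.1 ≠ v ∧ e.2 ≠ v)).card < _
    omega

end Net

namespace Net

variable {X : Type}

lemma clean_ex {N' P : Net X} (hN' : N'.IsNetwork) (hI : Invar N' P) :
    ∃ M, CleansTo P M ∧ Invar N' M := by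
  generalize hn : P.verts.card + P.edges.card = n
  induction n using Nat.strong_induction_on generalizing P with
  | _ n ih =>
    by_cases hterm : ∃ P₂, CleanStep P P₂
    · obtain ⟨P₂, hstep⟩ := hterm
      obtain ⟨hI₂, hlt⟩ := clean_pres hN' hI hstep
      obtain ⟨M, ⟨hsteps, hterm'⟩, hIM⟩ := ih _ (hn ▸ hlt) hI₂ rfl
      exact ⟨M, ⟨Relation.ReflTransGen.head hstep hsteps, hterm'⟩, hIM⟩
    · push_neg at hterm
      exact ⟨P, ⟨Relation.ReflTransGen.refl, fun M' h => hterm M' h⟩, hI⟩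

lemma terminal_iso {N' M : Net X} (hN' : N'.IsNetwork) (hI : Invar N' M)
    (hterm : ∀ M₂, ¬ CleanStep M M₂) : M.Iso N' := by
  obtain ⟨hC, hA, hlab, M'', hsubM, hiso⟩ := hI
  have hsink : ∀ v ∈ M.verts, M.outdeg v = 0 → ∃ x, M.lab v = some x := by
    intro v hv h0
    cases hl : M.lab v with
    | some x => exact ⟨x, rfl⟩
    | none => exact absurd (CleanStep.delNode M v hv h0 hl) (hterm _)
  have hliveAll : ∀ v ∈ M.verts, M.liveP v := fun v hv => reach_label hC hA hsink v hv
  have hLN : M.LiveNet = M := by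
    refine net_eq ?_ ?_ rfl
    · exact Finset.filter_true_of_mem (fun v hv => hliveAll v hv)
    · exact Finset.filter_true_of_mem
        (fun e he => ⟨hliveAll _ (hC _ he).1, hliveAll _ (hC _ he).2⟩)
  rw [hLN] at hiso
  have hno11 : ∀ x ∈ M.verts, ¬(M.indeg x = 1 ∧ M.outdeg x = 1) := by
    rintro x hx ⟨hi, ho⟩
    obtain ⟨a, ha⟩ := exists_edge_of_indeg_pos (P := M) (v := x) (by omega)
    obtain ⟨b, hb⟩ := exists_edge_of_outdeg_pos (P := M) (v := x) (by omega)
    exact hterm _ (CleanStep.suppress M a x b hi ho ha hb)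
  have gs := goodSub_of_subdiv hN' hsubM
  obtain ⟨f, hbij, hef, hlf⟩ := hiso
  have hno11'' : ∀ x ∈ M''.verts, ¬(M''.indeg x = 1 ∧ M''.outdeg x = 1) := by
    rintro x hx ⟨hi, ho⟩
    have h5 := iso_indeg gs.closed hC hbij hef hx
    have h6 := iso_outdeg gs.closed hC hbij hef hx
    have hfx : f x ∈ M.verts := Finset.mem_coe.1 (hbij.mapsTo (Finset.mem_coe.2 hx))
    exact hno11 (f x) hfx ⟨by omega, by omega⟩
  have heq : M'' = N' := subdiv_eq_of_no11 hN' hsubM hno11''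
  rw [heq] at hbij hef hlf
  exact iso_symm ⟨f, hbij, hef, hlf⟩

end Net

namespace Net

variable {X : Type}

/-- Crossing lemma: a path from outside `T` into `T` uses an entry edge. -/
lemma cross {P : Net X} {T : Finset ℕ} {x l : ℕ} (hr : P.Reaches x l)
    (hl : l ∈ T) : x ∉ T → ∃ c d, c ∉ T ∧ d ∈ T ∧ P.Edge c d ∧ P.Reaches x c := by
  induction hr using Relation.ReflTransGen.head_induction_on with
  | refl => exact fun hx => absurd hl hx
  | head hac hcl ih =>
    rename_i a c
    intro hx
    by_cases hc : c ∈ T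
    · exact ⟨a, c, hx, hc, hac, Relation.ReflTransGen.refl⟩
    · obtain ⟨c', d', h1, h2, h3, h4⟩ := ih hc
      exact ⟨c', d', h1, h2, h3, hac.reach.trans h4⟩

/-- Transfer of a subdivision step across an isomorphism. -/
lemma iso_subdivNet {A B : Net X} {g : ℕ → ℕ} {t s z x : ℕ}
    (hbij : Set.BijOn g ↑A.verts ↑B.verts)
    (hef : ∀ a ∈ A.verts, ∀ b ∈ A.verts, (A.Edge a b ↔ B.Edge (g a) (g b)))
    (hlf : ∀ a ∈ A.verts, A.lab a = B.lab (g a))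
    (ht : t ∈ A.verts) (hs : s ∈ A.verts) (hz : z ∉ A.verts) (hx : x ∉ B.verts)
    (hlabz : A.lab z = B.lab x) (hCA : A.Closed) (hCB : B.Closed) :
    (Set.BijOn (fun y => if y = z then x else g y)
      ↑((A.subdivNet t s z).verts) ↑((B.subdivNet (g t) (g s) x).verts)) ∧
    (∀ a ∈ (A.subdivNet t s z).verts, ∀ b ∈ (A.subdivNet t s z).verts,
      ((A.subdivNet t s z).Edge a b ↔ (B.subdivNet (g t) (g s) x).Edge
        ((fun y => if y = z then x else g y) a) ((fun y => if y = z then x else g y) b))) ∧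
    (∀ a ∈ (A.subdivNet t s z).verts, (A.subdivNet t s z).lab a =
      (B.subdivNet (g t) (g s) x).lab ((fun y => if y = z then x else g y) a)) := by
  set g' := fun y => if y = z then x else g y with hg'
  have hgmem : ∀ a ∈ A.verts, g a ∈ B.verts := fun a ha =>
    Finset.mem_coe.1 (hbij.mapsTo (Finset.mem_coe.2 ha))
  have hg'eq : ∀ a ∈ A.verts, g' a = g a := by
    intro a ha
    have : a ≠ z := by rintro rfl; exact hz ha
    simp [hg', this]
  have hg'z : g' z = x := by simp [hg']
  have hgx : ∀ a ∈ A.verts, g a ≠ x := fun a ha hcon => hx (hcon ▸ hgmem a ha)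
  refine ⟨⟨?_, ?_, ?_⟩, ?_, ?_⟩
  · -- mapsTo
    intro a ha
    rw [Finset.mem_coe, subdivNet, Finset.mem_insert] at ha
    rw [Finset.mem_coe, subdivNet, Finset.mem_insert]
    rcases ha with rfl | ha
    · left; exact hg'z
    · right; rw [hg'eq a ha]; exact hgmem a ha
  · -- injOn
    intro a ha b hb heq
    rw [Finset.mem_coe, subdivNet, Finset.mem_insert] at ha hb
    rcases ha with rfl | ha <;> rcases hb with rfl | hb
    · rfl
    · rw [hg'z, hg'eq b hb] at heq
      exact absurd heq.symm (hgx b hb)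
    · rw [hg'z, hg'eq a ha] at heq
      exact absurd heq (hgx a ha)
    · rw [hg'eq a ha, hg'eq b hb] at heq
      exact hbij.injOn (Finset.mem_coe.2 ha) (Finset.mem_coe.2 hb) heq
  · -- surjOn
    intro y hy
    rw [Finset.mem_coe, subdivNet, Finset.mem_insert] at hy
    rcases hy with rfl | hy
    · exact ⟨z, by rw [Finset.mem_coe, subdivNet]; exact Finset.mem_insert_self _ _, hg'z⟩
    · obtain ⟨a, ha, hga⟩ := hbij.surjOn (Finset.mem_coe.2 hy)
      refine ⟨a, ?_, ?_⟩
      · rw [Finset.mem_coe, subdivNet, Finset.mem_insert]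
        exact Or.inr (Finset.mem_coe.1 ha)
      · rw [hg'eq a (Finset.mem_coe.1 ha)]; exact hga
  · -- edges
    intro a ha b hb
    rw [subdivNet, Finset.mem_insert] at ha hb
    constructor
    · intro hab
      rcases (subdivNet_edge_iff (M := A)).1 hab with ⟨ha1, hb1⟩ | ⟨ha1, hb1⟩ | ⟨hm, -⟩
      · apply (subdivNet_edge_iff (M := B)).2
        left
        rw [ha1, hb1, hg'z, hg'eq t ht]
        exact ⟨rfl, rfl⟩
      · apply (subdivNet_edge_iff (M := B)).2
        right; left
        rw [ha1, hb1, hg'z, hg'eq s hs]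
        exact ⟨rfl, rfl⟩
      · have ham : a ∈ A.verts := (hCA _ hm).1
        have hbm : b ∈ A.verts := (hCA _ hm).2
        apply (subdivNet_edge_iff (M := B)).2
        right; right
        rw [hg'eq a ham, hg'eq b hbm]
        refine ⟨(hef a ham b hbm).1 hm, ?_⟩
        rintro ⟨hga, hgb⟩
        have hat : a = t := hbij.injOn (Finset.mem_coe.2 ham) (Finset.mem_coe.2 ht) hga
        have hbs : b = s := hbij.injOn (Finset.mem_coe.2 hbm) (Finset.mem_coe.2 hs) hgb
        -- then (a,b) = (t,s) which was erased: contradiction with hm ∈ erased set?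
        rcases Finset.mem_insert.1 hab with h' | h'
        · have := congrArg Prod.snd h'
          simp only at this
          exact hz (this ▸ hbm)
        · rcases Finset.mem_insert.1 h' with h'' | h''
          · have := congrArg Prod.fst h''
            simp only at this
            exact hz (this ▸ ham)
          · exact (Finset.mem_erase.1 h'').1 (by rw [hat, hbs])
    · intro hab
      rcases (subdivNet_edge_iff (M := B)).1 hab with ⟨ha1, hb1⟩ | ⟨ha1, hb1⟩ | ⟨hm, hne⟩
      · -- g' a = g t, g' b = x  ⇒  a = t, b = z
        apply (subdivNet_edge_iff (M := A)).2
        left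
        constructor
        · rcases ha with rfl | ha
          · rw [hg'z] at ha1; exact absurd ha1.symm (hgx t ht)
          · rw [hg'eq a ha] at ha1
            exact hbij.injOn (Finset.mem_coe.2 ha) (Finset.mem_coe.2 ht) ha1
        · rcases hb with rfl | hb
          · rfl
          · rw [hg'eq b hb] at hb1; exact absurd hb1 (hgx b hb)
      · apply (subdivNet_edge_iff (M := A)).2
        right; left
        constructor
        · rcases ha with rfl | ha
          · rfl
          · rw [hg'eq a ha] at ha1; exact absurd ha1 (hgx a ha)
        · rcases hb with rfl | hb
          · rw [hg'z] at hb1; exact absurd hb1.symm (hgx s hs)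
          · rw [hg'eq b hb] at hb1
            exact hbij.injOn (Finset.mem_coe.2 hb) (Finset.mem_coe.2 hs) hb1
      · -- old edge in B
        have hanz : a ≠ z := by
          rintro rfl
          rw [hg'z] at hm
          exact hx (hCB _ hm).1
        have hbnz : b ≠ z := by
          rintro rfl
          rw [hg'z] at hm
          exact hx (hCB _ hm).2
        have ham : a ∈ A.verts := by
          rcases ha with rfl | ha
          · exact absurd rfl hanz
          · exact ha
        have hbm : b ∈ A.verts := by
          rcases hb with rfl | hb
          · exact absurd rfl hbnz
          · exact hb
        rw [hg'eq a ham, hg'eq b hbm] at hm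
        apply (subdivNet_edge_iff (M := A)).2
        right; right
        refine ⟨(hef a ham b hbm).2 hm, ?_⟩
        rintro ⟨h5, h6⟩
        exact hne ⟨by rw [hg'eq a ham, h5], by rw [hg'eq b hbm, h6]⟩
  · -- labels
    intro a ha
    rw [subdivNet, Finset.mem_insert] at ha
    show A.lab a = B.lab (g' a)
    rcases ha with rfl | ha
    · rw [hg'z]; exact hlabz
    · rw [hg'eq a ha]; exact hlf a ha

end Net

namespace Net

variable {X : Type}

lemma deleteEdges_indeg_eq {N : Net X} {E : Finset (ℕ × ℕ)} {x : ℕ}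
    (h : ∀ e ∈ E, e.2 ≠ x) : (N.deleteEdges E).indeg x = N.indeg x := by
  unfold indeg deleteEdges
  congr 1
  apply Finset.ext
  intro e
  simp only [Finset.mem_filter, Finset.mem_sdiff]
  constructor
  · rintro ⟨⟨he, -⟩, h2⟩; exact ⟨he, h2⟩
  · rintro ⟨he, h2⟩
    exact ⟨⟨he, fun heE => h e heE h2⟩, h2⟩

lemma deleteEdges_indeg_one {N : Net X} {E : Finset (ℕ × ℕ)} {x : ℕ} {e₀ : ℕ × ℕ}
    (he₀ : e₀ ∈ E) (he₀2 : e₀.2 = x) (hmem : e₀ ∈ N.edges)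
    (huniq : ∀ e ∈ E, e.2 = x → e = e₀) (hdeg : N.indeg x = 2) :
    (N.deleteEdges E).indeg x = 1 := by
  have hfe : ((N.deleteEdges E).edges.filter fun e => e.2 = x) =
      (N.edges.filter fun e => e.2 = x).erase e₀ := by
    apply Finset.ext
    intro e
    simp only [deleteEdges, Finset.mem_filter, Finset.mem_sdiff, Finset.mem_erase]
    constructor
    · rintro ⟨⟨he, heE⟩, h2⟩
      exact ⟨fun hcon => heE (hcon ▸ he₀), he, h2⟩
    · rintro ⟨hne, he, h2⟩
      refine ⟨⟨he, fun heE => hne (huniq e heE h2)⟩, h2⟩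
  show ((N.deleteEdges E).edges.filter fun e => e.2 = x).card = 1
  rw [hfe, Finset.card_erase_of_mem (Finset.mem_filter.2 ⟨hmem, he₀2⟩)]
  show N.indeg x - 1 = 1
  omega

lemma nonempty_choose_congr {A B : Finset (ℕ × ℕ)} (h : A = B) (hA : A.Nonempty)
    (hB : B.Nonempty) : hA.choose = hB.choose := by subst h; rfl

lemma init_invar {N N' S M' : Net X} (hN : N.IsNetwork) (hN' : N'.IsNetwork)
    (hS : Subgraph S N) (hsub : Subdivision N' M') (hiso : Iso M' S) :
    ∃ E : Finset (ℕ × ℕ),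
      (∀ e ∈ E, N.IsReticEdge e) ∧
      (∀ e ∈ E, ∀ e' ∈ E, e.2 = e'.2 → e = e') ∧
      Invar N' (N.deleteEdges E) := by
  classical
  obtain ⟨f, hbij, hef, hlf⟩ := hiso
  have gs := goodSub_of_subdiv hN' hsub
  set T : Finset ℕ := M'.verts.image f with hT
  set TE : Finset (ℕ × ℕ) := M'.edges.image (fun e => (f e.1, f e.2)) with hTE
  set E : Finset (ℕ × ℕ) := (N.verts.filter (fun r => N.IsRetic r)).biUnion (fun r =>
      if h : ((N.edges.filter fun e => e.2 = r) \ TE).Nonempty then {h.choose} else ∅) with hE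
  -- basic membership facts about E
  have hEat : ∀ e ∈ E, ∃ hne : ((N.edges.filter fun e' => e'.2 = e.2) \ TE).Nonempty,
      e = hne.choose ∧ N.IsRetic e.2 ∧ e ∈ N.edges ∧ e ∉ TE := by
    intro e he
    obtain ⟨r, hr, hre⟩ := Finset.mem_biUnion.1 he
    obtain ⟨hrm, hretic⟩ := Finset.mem_filter.1 hr
    by_cases hne : ((N.edges.filter fun e' => e'.2 = r) \ TE).Nonempty
    · rw [dif_pos hne] at hre
      have heq : e = hne.choose := Finset.mem_singleton.1 hre
      have hspec := hne.choose_spec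
      rw [← heq] at hspec
      obtain ⟨hef', hnte⟩ := Finset.mem_sdiff.1 hspec
      obtain ⟨hee, he2⟩ := Finset.mem_filter.1 hef'
      subst he2
      exact ⟨hne, heq, hretic, hee, hnte⟩
    · rw [dif_neg hne] at hre
      exact absurd hre (Finset.notMem_empty e)
  have hEretic : ∀ e ∈ E, N.IsReticEdge e := by
    intro e he
    obtain ⟨-, -, hr, hm, -⟩ := hEat e he
    exact ⟨hm, hr⟩
  have hEuniq : ∀ e ∈ E, ∀ e' ∈ E, e.2 = e'.2 → e = e' := by
    intro e he e' he' h2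
    obtain ⟨hne, heq, -, -, -⟩ := hEat e he
    obtain ⟨hne', heq', -, -, -⟩ := hEat e' he'
    rw [heq, heq']
    have hseteq : ((N.edges.filter fun e' => e'.2 = e.2) \ TE) =
        ((N.edges.filter fun e'' => e''.2 = e'.2) \ TE) := by rw [h2]
    exact nonempty_choose_congr hseteq hne hne'
  have hEnotTE : ∀ e ∈ E, e ∉ TE := by
    intro e he
    obtain ⟨-, -, -, -, h5⟩ := hEat e he
    exact h5
  have hEin : ∀ r, N.IsRetic r →
      ∀ hne : ((N.edges.filter fun e => e.2 = r) \ TE).Nonempty, hne.choose ∈ E := by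
    intro r hr hne
    rw [hE]
    apply Finset.mem_biUnion.2
    refine ⟨r, Finset.mem_filter.2 ⟨hr.1, hr⟩, ?_⟩
    rw [dif_pos hne]
    exact Finset.mem_singleton_self _
  set P : Net X := N.deleteEdges E with hP
  have hPvertsN : P.verts = N.verts := rfl
  have hPlabN : P.lab = N.lab := rfl
  have hPsub : ∀ a b, P.Edge a b → N.Edge a b := fun a b h => (Finset.mem_sdiff.1 h).1
  have hPC : P.Closed := fun e he => hN.1 e (Finset.mem_sdiff.1 he).1
  have hPA : P.Acyc := acyc_mono hPsub hN.2.1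
  have hPlab : ∀ y, (∃ x, P.lab y = some x) → P.outdeg y = 0 := by
    intro y hy
    have hleaf := (hN.2.2.2.2.1 y).1 hy
    have h5 := outdeg_mono (show P.edges ⊆ N.edges from Finset.sdiff_subset) y
    have h6 := hleaf.2.2
    omega
  -- basic facts about T and TE
  have hfS : ∀ x ∈ M'.verts, f x ∈ S.verts := fun x hx =>
    Finset.mem_coe.1 (hbij.mapsTo (Finset.mem_coe.2 hx))
  have hTsub : T ⊆ N.verts := by
    intro y hy
    obtain ⟨x, hx, rfl⟩ := Finset.mem_image.1 hy
    exact hS.1 (hfS x hx)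
  have hTEsub : TE ⊆ N.edges := by
    intro e he
    obtain ⟨e', he', rfl⟩ := Finset.mem_image.1 he
    have h1 := (gs.closed _ he').1
    have h2 := (gs.closed _ he').2
    exact hS.2.1 ((hef _ h1 _ h2).1 he')
  have hTEmem : ∀ e ∈ TE, e.1 ∈ T ∧ e.2 ∈ T := by
    intro e he
    obtain ⟨e', he', rfl⟩ := Finset.mem_image.1 he
    exact ⟨Finset.mem_image.2 ⟨e'.1, (gs.closed _ he').1, rfl⟩,
      Finset.mem_image.2 ⟨e'.2, (gs.closed _ he').2, rfl⟩⟩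
  have hTEiff : ∀ x ∈ M'.verts, ∀ y ∈ M'.verts, ((f x, f y) ∈ TE ↔ M'.Edge x y) := by
    intro x hx y hy
    constructor
    · intro he
      obtain ⟨e', he', heq⟩ := Finset.mem_image.1 he
      rw [Prod.mk.injEq] at heq
      have h1 := (gs.closed _ he').1
      have h2 := (gs.closed _ he').2
      have e1 : e'.1 = x := hbij.injOn (Finset.mem_coe.2 h1) (Finset.mem_coe.2 hx) heq.1
      have e2 : e'.2 = y := hbij.injOn (Finset.mem_coe.2 h2) (Finset.mem_coe.2 hy) heq.2
      rw [← e1, ← e2]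
      show (e'.1, e'.2) ∈ M'.edges
      rw [Prod.mk.eta]
      exact he'
    · intro he
      exact Finset.mem_image.2 ⟨(x, y), he, rfl⟩
  have hlabT : ∀ x ∈ M'.verts, N.lab (f x) = M'.lab x := by
    intro x hx
    rw [hlf x hx]
    exact (hS.2.2 (f x) (hfS x hx)).symm
  have hTEP : TE ⊆ P.edges := by
    intro e he
    exact Finset.mem_sdiff.2 ⟨hTEsub he, fun heE => hEnotTE e heE he⟩
  have hleafcov : ∀ l xx, N.lab l = some xx → l ∈ T := by
    intro l xx hl
    obtain ⟨v', hv', -⟩ := hN'.2.2.2.2.2 xx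
    have hv'm : v' ∈ N'.verts := ((hN'.2.2.2.2.1 v').1 ⟨xx, hv'⟩).1
    have hv'M : v' ∈ M'.verts := gs.verts_sub hv'm
    have : N.lab (f v') = some xx := by
      rw [hlabT v' hv'M, gs.lab_eq]; exact hv'
    have huniq := (hN.2.2.2.2.2 xx).unique hl this
    rw [huniq]
    exact Finset.mem_image.2 ⟨v', hv'M, rfl⟩
  -- the root of N' and the top vertex
  obtain ⟨r', hr', hr'u⟩ := hN'.2.2.1
  have hr'm : r' ∈ M'.verts := gs.verts_sub hr'.1
  have hr'in : M'.indeg r' = 0 := by rw [(gs.deg_old r' hr'.1).1]; exact hr'.2.1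
  have hr'out : M'.outdeg r' = 1 := by rw [(gs.deg_old r' hr'.1).2]; exact hr'.2.2
  have hindeg0 : ∀ x ∈ M'.verts, M'.indeg x = 0 → x = r' := by
    intro x hx h0
    by_cases hxN : x ∈ N'.verts
    · have hd := (gs.deg_old x hxN).1
      rcases hN'.2.2.2.1 x hxN with h | h | h | h
      · exact hr'u x h
      · exfalso; have := h.2.1; omega
      · exfalso; have := h.2.1; omega
      · exfalso; have := h.2.1; omega
    · exfalso; have := (gs.deg_new x hx hxN).1; omega
  set top := f r' with htop
  have htopT : top ∈ T := Finset.mem_image.2 ⟨r', hr'm, rfl⟩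
  have hTEtop : ∀ e ∈ TE, e.2 ≠ top := by
    intro e he hcon
    obtain ⟨e', he', heq⟩ := Finset.mem_image.1 he
    have h2 := (gs.closed _ he').2
    have he2 : e'.2 = r' := hbij.injOn (Finset.mem_coe.2 h2) (Finset.mem_coe.2 hr'm)
      ((congrArg Prod.snd heq).trans hcon)
    have : M'.Edge e'.1 r' := by
      rw [← he2]
      show (e'.1, e'.2) ∈ M'.edges
      rw [Prod.mk.eta]
      exact he'
    have := edge_indeg_pos this
    omega
  have hEkey : ∀ a b, (a, b) ∈ N.edges → b ∈ T → (a, b) ∉ TE → b ≠ top → (a, b) ∈ E := by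
    intro a b hab hbT hnTE hbtop
    obtain ⟨b'', hb'', hfb⟩ := Finset.mem_image.1 hbT
    have hbr' : b'' ≠ r' := by
      rintro rfl
      exact hbtop hfb.symm
    have hbpos : 0 < M'.indeg b'' := by
      rcases Nat.eq_zero_or_pos (M'.indeg b'') with h0 | h
      · exact absurd (hindeg0 b'' hb'' h0) hbr'
      · exact h
    obtain ⟨p'', hp''⟩ := exists_edge_of_indeg_pos hbpos
    have hTEpb : (f p'', b) ∈ TE := by
      rw [← hfb]
      exact Finset.mem_image.2 ⟨(p'', b''), hp'', rfl⟩
    have hne2 : (f p'', b) ≠ (a, b) := by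
      intro hcon
      rw [hcon] at hTEpb
      exact hnTE hTEpb
    have hpair : ({(f p'', b), (a, b)} : Finset (ℕ × ℕ)) ⊆ N.edges.filter fun e => e.2 = b := by
      intro e he
      rcases Finset.mem_insert.1 he with rfl | he
      · exact Finset.mem_filter.2 ⟨hTEsub hTEpb, rfl⟩
      · rw [Finset.mem_singleton.1 he]
        exact Finset.mem_filter.2 ⟨hab, rfl⟩
    have hcard2 : 2 ≤ N.indeg b := by
      have h5 := Finset.card_le_card hpair
      rw [Finset.card_insert_of_notMem (by simpa using hne2), Finset.card_singleton] at h5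
      exact h5
    have hbN : b ∈ N.verts := (hN.1 _ hab).2
    have hbretic : N.IsRetic b := by
      rcases hN.2.2.2.1 b hbN with h | h | h | h
      · exfalso; have := h.2.1; omega
      · exfalso; have := h.2.1; omega
      · exfalso; have := h.2.1; omega
      · exact h
    have hfilter : (N.edges.filter fun e => e.2 = b) = {(f p'', b), (a, b)} := by
      refine (Finset.eq_of_subset_of_card_le hpair ?_).symm
      have : 2 ≤ ({(f p'', b), (a, b)} : Finset (ℕ × ℕ)).card := by
        rw [Finset.card_insert_of_notMem (by simpa using hne2), Finset.card_singleton]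
      have h6 : (N.edges.filter fun e => e.2 = b).card = 2 := hbretic.2.1
      omega
    have hCset : ((N.edges.filter fun e => e.2 = b) \ TE) = {(a, b)} := by
      rw [hfilter]
      apply Finset.ext
      intro e
      simp only [Finset.mem_sdiff, Finset.mem_insert, Finset.mem_singleton]
      constructor
      · rintro ⟨rfl | h1, h2⟩
        · exact absurd hTEpb h2
        · exact h1
      · rintro rfl
        exact ⟨Or.inr rfl, hnTE⟩
    have hne3 : ((N.edges.filter fun e => e.2 = b) \ TE).Nonempty := by
      rw [hCset]; exact ⟨_, Finset.mem_singleton_self _⟩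
    have hch : hne3.choose = (a, b) := by
      have h5 := hne3.choose_spec
      have hsub5 : ∀ z, z ∈ ((N.edges.filter fun e => e.2 = b) \ TE) →
          z ∈ ({(a, b)} : Finset (ℕ × ℕ)) := by
        intro z hz
        rw [← hCset]
        exact hz
      exact Finset.mem_singleton.1 (hsub5 _ h5)
    have h6 := hEin b hbretic hne3
    rw [hch] at h6
    exact h6
  -- in-degrees in P
  have hnonretic_indeg : ∀ x, ¬ N.IsRetic x → P.indeg x = N.indeg x := by
    intro x hx
    apply deleteEdges_indeg_eq
    intro e he hcon
    exact hx (hcon ▸ (hEretic e he).2)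
  have hretic_ge1 : ∀ r, N.IsRetic r → 1 ≤ P.indeg r := by
    intro r hr
    by_cases hEex : ∃ e₀ ∈ E, e₀.2 = r
    · obtain ⟨e₀, he₀, h2⟩ := hEex
      have h5 := deleteEdges_indeg_one he₀ h2 (hEretic e₀ he₀).1
        (fun e he h3 => hEuniq e he e₀ he₀ (h3.trans h2.symm)) hr.2.1
      show 1 ≤ (N.deleteEdges E).indeg r
      omega
    · push_neg at hEex
      have h5 := deleteEdges_indeg_eq (N := N) (E := E) hEex
      have h6 := hr.2.1
      show 1 ≤ (N.deleteEdges E).indeg r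
      omega
  have hretic_noTE : ∀ r, N.IsRetic r → (∀ e ∈ TE, e.2 ≠ r) → P.indeg r = 1 := by
    intro r hr hrT
    have hCne : ((N.edges.filter fun e => e.2 = r) \ TE).Nonempty := by
      have h6 : 0 < N.indeg r := by have := hr.2.1; omega
      obtain ⟨u0, hu0⟩ := exists_edge_of_indeg_pos h6
      refine ⟨(u0, r), Finset.mem_sdiff.2 ⟨Finset.mem_filter.2 ⟨hu0, rfl⟩, ?_⟩⟩
      intro hmem'
      exact hrT _ hmem' rfl
    have hch := hEin r hr hCne
    have hspec := hCne.choose_spec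
    obtain ⟨hmf, hnte⟩ := Finset.mem_sdiff.1 hspec
    obtain ⟨hmm, hm2⟩ := Finset.mem_filter.1 hmf
    exact deleteEdges_indeg_one hch hm2 hmm
      (fun e he h3 => hEuniq e he _ hch (h3.trans hm2.symm)) hr.2.1
  have hretic_notT : ∀ r, N.IsRetic r → r ∉ T → P.indeg r = 1 := fun r hr hrT =>
    hretic_noTE r hr (fun e he hc => hrT (hc ▸ (hTEmem _ he).2))
  obtain ⟨ρ, hρ, hρu⟩ := hN.2.2.1
  have hρnr : ¬ N.IsRetic ρ := by
    intro hc
    have := hc.2.1; have := hρ.2.1; omega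
  have hρ0 : P.indeg ρ = 0 := by rw [hnonretic_indeg ρ hρnr]; exact hρ.2.1
  have hP0 : ∀ x ∈ P.verts, P.indeg x = 0 → x = ρ := by
    intro x hx h0
    rcases hN.2.2.2.1 x hx with h | h | h | h
    · exact hρu x h
    · exfalso
      have h5 := hnonretic_indeg x (by intro hc; have := hc.2.1; have := h.2.1; omega)
      have := h.2.1; omega
    · exfalso
      have h5 := hnonretic_indeg x (by intro hc; have := hc.2.1; have := h.2.1; omega)
      have := h.2.1; omega
    · exfalso
      have := hretic_ge1 x h; omega
  have hρreach : ∀ x ∈ P.verts, P.Reaches ρ x := root_reaches hPC hPA hP0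
  -- liveness facts
  have hfP : ∀ a b, M'.Edge a b → P.Edge (f a) (f b) := fun a b he =>
    hTEP (Finset.mem_image.2 ⟨(a, b), he, rfl⟩)
  have hfreach : ∀ {x y}, M'.Reaches x y → P.Reaches (f x) (f y) := fun h =>
    reaches_map f (fun a b e => (hfP a b e).reach) h
  have hM'sink : ∀ v ∈ M'.verts, M'.outdeg v = 0 → ∃ xx, M'.lab v = some xx := by
    intro v hv h0
    by_cases hvN : v ∈ N'.verts
    · have hd := (gs.deg_old v hvN).2
      rcases hN'.2.2.2.1 v hvN with h | h | h | h
      · exfalso; have := h.2.2; omega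
      · rw [gs.lab_eq]; exact (hN'.2.2.2.2.1 v).2 h
      · exfalso; have := h.2.2; omega
      · exfalso; have := h.2.2; omega
    · exfalso; have := (gs.deg_new v hv hvN).2; omega
  have hTlive : ∀ y ∈ T, P.liveP y := by
    intro y hy
    obtain ⟨x, hx, rfl⟩ := Finset.mem_image.1 hy
    obtain ⟨l, hl, hr⟩ := reach_label gs.closed gs.acy hM'sink x hx
    refine ⟨f l, ?_, hfreach hr⟩
    obtain ⟨xx, hxx⟩ := hl
    exact ⟨xx, by rw [hPlabN, hlabT l (mem_verts_of_reaches gs.closed hx hr), hxx]⟩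
  have htopreachN : ∀ x ∈ M'.verts, N.Reaches top (f x) := by
    intro x hx
    exact reaches_mono hPsub (hfreach (root_reaches gs.closed gs.acy hindeg0 x hx))
  have hentry : ∀ c d, c ∉ T → P.Edge c d → d ∈ T → d = top := by
    intro c d hc hcd hd
    by_cases hdt : d = top
    · exact hdt
    · exfalso
      have hNe : (c, d) ∈ N.edges := hPsub _ _ hcd
      have hnTE : (c, d) ∉ TE := fun h => hc (hTEmem _ h).1
      exact (Finset.mem_sdiff.1 hcd).2 (hEkey c d hNe hd hnTE hdt)
  have hUreachtop : ∀ x, P.liveP x → x ∉ T → P.Reaches x top := by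
    intro x hx hxT
    obtain ⟨l, hl, hr⟩ := hx
    have hlT : l ∈ T := by
      obtain ⟨xx, hxx⟩ := hl
      exact hleafcov l xx (by rw [← hPlabN]; exact hxx)
    obtain ⟨c, d, hc, hd, hcd, hxc⟩ := cross hr hlT hxT
    have h5 := hentry c d hc hcd hd
    rw [h5] at hcd
    exact hxc.trans hcd.reach
  have hTdead : ∀ a ∈ T, ∀ y, P.Edge a y → y ∉ T → ¬ P.liveP y := by
    intro a ha y hay hyT hly
    have h5 := hUreachtop y hly hyT
    obtain ⟨x, hx, rfl⟩ := Finset.mem_image.1 ha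
    exact hN.2.1 (f x) y (hPsub _ _ hay) ((reaches_mono hPsub h5).trans (htopreachN x hx))
  have hTT : ∀ a b, P.Edge a b → a ∈ T → b ∈ T → (a, b) ∈ TE := by
    intro a b hab ha hb
    by_cases h : (a, b) ∈ TE
    · exact h
    exfalso
    by_cases hbt : b = top
    · obtain ⟨x, hx, rfl⟩ := Finset.mem_image.1 ha
      refine hN.2.1 (f x) b (hPsub _ _ hab) ?_
      rw [hbt]
      exact htopreachN x hx
    · exact (Finset.mem_sdiff.1 hab).2 (hEkey a b (hPsub _ _ hab) hb h hbt)
  refine ⟨E, hEretic, hEuniq, hPC, hPA, hPlab, ?_⟩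
  by_cases hρT : ρ ∈ T
  · -- Case A : the root of N is the top of the embedded subdivision
    have hρtop : ρ = top := by
      obtain ⟨x, hx, hfx⟩ := Finset.mem_image.1 hρT
      have h0 : M'.indeg x = 0 := by
        by_contra hpos
        obtain ⟨p, hp⟩ := exists_edge_of_indeg_pos (Nat.pos_of_ne_zero hpos)
        have h5 : (f p, f x) ∈ TE := Finset.mem_image.2 ⟨(p, x), hp, rfl⟩
        have hNe := hTEsub h5
        rw [hfx] at hNe
        have := edge_indeg_pos (show N.Edge (f p) ρ from hNe)
        have := hρ.2.1
        omega
      rw [← hfx, hindeg0 x hx h0]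
    have hlivesub : ∀ x ∈ P.verts, P.liveP x → x ∈ T := by
      intro x hxm hlx
      by_contra hxT
      have h5 := hUreachtop x hlx hxT
      obtain ⟨c, d, hc, hd, hcd, -⟩ := cross h5 htopT hxT
      have hdt := hentry c d hc hcd hd
      rw [hdt] at hcd
      have h6 : (c, ρ) ∈ N.edges := by rw [hρtop]; exact hPsub _ _ hcd
      have := edge_indeg_pos (show N.Edge c ρ from h6)
      have := hρ.2.1
      omega
    have hLN : P.LiveNet = (⟨T, TE, N.lab⟩ : Net X) := by
      refine net_eq ?_ ?_ rfl
      · apply Finset.ext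
        intro x
        simp only [LiveNet, Finset.mem_filter]
        constructor
        · rintro ⟨hxm, hlx⟩
          exact hlivesub x hxm hlx
        · intro hxT
          exact ⟨hTsub hxT, hTlive x hxT⟩
      · apply Finset.ext
        rintro ⟨a, b⟩
        simp only [LiveNet, Finset.mem_filter]
        constructor
        · rintro ⟨hm, hla, hlb⟩
          exact hTT a b hm (hlivesub a (hPC _ hm).1 hla) (hlivesub b (hPC _ hm).2 hlb)
        · intro hTEm
          exact ⟨hTEP hTEm, hTlive _ (hTEmem _ hTEm).1, hTlive _ (hTEmem _ hTEm).2⟩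
    refine ⟨M', hsub, ?_⟩
    rw [hLN]
    refine ⟨f, ?_, ?_, ?_⟩
    · show Set.BijOn f ↑M'.verts ↑T
      rw [hT, Finset.coe_image]
      exact hbij.injOn.bijOn_image
    · intro x hx y hy
      exact (hTEiff x hx y hy).symm
    · intro x hx
      exact (hlabT x hx).symm
  · -- Case B : the root of N lies strictly above the embedded subdivision
    have htopρ : top ≠ ρ := fun h => hρT (h ▸ htopT)
    have htopN : top ∈ N.verts := hTsub htopT
    have htop1 : P.indeg top = 1 := by
      rcases hN.2.2.2.1 top htopN with hh | hh | hh | hh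
      · exact absurd (hρu _ hh) htopρ
      · rw [hnonretic_indeg top (by intro hc; have := hc.2.1; have := hh.2.1; omega)]
        exact hh.2.1
      · rw [hnonretic_indeg top (by intro hc; have := hc.2.1; have := hh.2.1; omega)]
        exact hh.2.1
      · exact hretic_noTE top hh (fun e he hc => hTEtop e he hc)
    obtain ⟨q, hq⟩ := exists_edge_of_indeg_pos (show 0 < P.indeg top by omega)
    have hquniq : ∀ c, P.Edge c top → c = q := fun c hc =>
      indeg_unique (le_of_eq htop1) hc hq
    have hqT : q ∉ T := by
      intro h
      exact hTEtop _ (hTT q top hq h htopT) rfl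
    have hqlive : P.liveP q := live_parent hq (hTlive top htopT)
    have hqm : q ∈ P.verts := (hPC _ hq).1
    have hUpar : ∀ x ∈ P.verts, P.liveP x → x ∉ T → x ≠ ρ →
        ∃ p, P.Edge p x ∧ P.liveP p ∧ p ∉ T ∧ p ∈ P.verts ∧ ∀ c, P.Edge c x → c = p := by
      intro x hxm hxlive hxT hxρ
      have hx1 : P.indeg x = 1 := by
        rcases hN.2.2.2.1 x hxm with hh | hh | hh | hh
        · exact absurd (hρu _ hh) hxρ
        · exfalso
          obtain ⟨xx, hxx⟩ := (hN.2.2.2.2.1 x).2 hh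
          exact hxT (hleafcov x xx hxx)
        · rw [hnonretic_indeg x (by intro hc; have := hc.2.1; have := hh.2.1; omega)]
          exact hh.2.1
        · exact hretic_notT x hh hxT
      obtain ⟨p, hp⟩ := exists_edge_of_indeg_pos (show 0 < P.indeg x by omega)
      refine ⟨p, hp, live_parent hp hxlive, ?_, (hPC _ hp).1,
        fun c hc => indeg_unique (le_of_eq hx1) hc hp⟩
      intro hpT
      exact hTdead p hpT x hp hxT hxlive
    set U : Finset ℕ := P.verts.filter (fun x => P.liveP x ∧ x ∉ T) with hU
    have hρlive : P.liveP ρ := by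
      obtain ⟨l, hl, hr⟩ := hTlive top htopT
      exact ⟨l, hl, (hρreach top (hTsub htopT)).trans hr⟩
    have hρU : ρ ∈ U := Finset.mem_filter.2 ⟨hρ.1, hρlive, hρT⟩
    have hqU : q ∈ U := Finset.mem_filter.2 ⟨hqm, hqlive, hqT⟩
    set AncU : ℕ → Finset ℕ := fun x => U.filter (fun y => P.Reaches y x) with hAncU
    set Rnet : ℕ → Net X := fun x => ⟨T ∪ AncU x,
      insert (x, top) (TE ∪ P.edges.filter (fun e => e.1 ∈ AncU x ∧ e.2 ∈ AncU x)),
      N.lab⟩ with hRnet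
    have hAncρ : AncU ρ = {ρ} := by
      apply Finset.ext
      intro y
      rw [hAncU]
      simp only [Finset.mem_filter, Finset.mem_singleton]
      constructor
      · rintro ⟨-, hyr⟩
        rcases Relation.ReflTransGen.cases_tail hyr with heq | ⟨c, -, hc⟩
        · exact heq.symm
        · exfalso
          have := edge_indeg_pos hc
          omega
      · rintro rfl
        exact ⟨hρU, Relation.ReflTransGen.refl⟩
    have hAncq_isU : ∀ y ∈ U, y ∈ AncU q := by
      intro y hy
      obtain ⟨hym, hylive, hyT⟩ := Finset.mem_filter.1 hy
      have h5 := hUreachtop y hylive hyT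
      rcases Relation.ReflTransGen.cases_tail h5 with heq | ⟨c, hyc, hc⟩
      · exact absurd (heq ▸ htopT) hyT
      · rw [hAncU]
        refine Finset.mem_filter.2 ⟨hy, ?_⟩
        rw [← hquniq c hc]
        exact hyc
    have hAncsubU : ∀ x, ∀ y ∈ AncU x, y ∈ U := by
      intro x y hy
      exact (Finset.mem_filter.1 hy).1
    have hUnotT : ∀ y ∈ U, y ∉ T := fun y hy => (Finset.mem_filter.1 hy).2.2
    have hRclosed : ∀ y ∈ U, (Rnet y).Closed := by
      rintro y hy ⟨a, b⟩ hab
      rw [hRnet] at hab ⊢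
      simp only [Finset.mem_insert, Finset.mem_union, Finset.mem_filter, Prod.mk.injEq] at hab ⊢
      rcases hab with ⟨rfl, rfl⟩ | hm | hm
      · constructor
        · right
          rw [hAncU]
          exact Finset.mem_filter.2 ⟨hy, Relation.ReflTransGen.refl⟩
        · left; exact htopT
      · exact ⟨Or.inl (hTEmem _ hm).1, Or.inl (hTEmem _ hm).2⟩
      · exact ⟨Or.inr hm.2.1, Or.inr hm.2.2⟩
    have PHI : ∀ n x, x ∈ U → (P.ancSet x).card = n →
        ∃ (M₂ : Net X) (g : ℕ → ℕ) (t₂ s₂ : ℕ), Subdivision N' M₂ ∧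
          t₂ ∈ M₂.verts ∧ s₂ ∈ M₂.verts ∧ M₂.Edge t₂ s₂ ∧ g t₂ = x ∧ g s₂ = top ∧
          Set.BijOn g ↑M₂.verts ↑(Rnet x).verts ∧
          (∀ a ∈ M₂.verts, ∀ b ∈ M₂.verts, (M₂.Edge a b ↔ (Rnet x).Edge (g a) (g b))) ∧
          (∀ a ∈ M₂.verts, M₂.lab a = (Rnet x).lab (g a)) := by
      intro n
      induction n using Nat.strong_induction_on with
      | _ n ih =>
        intro x hxU hn
        obtain ⟨hxm, hxlive, hxT⟩ := Finset.mem_filter.1 hxU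
        have hAncmem : ∀ x' y, y ∈ AncU x' ↔ (y ∈ U ∧ P.Reaches y x') := by
          intro x' y
          rw [hAncU]
          exact Finset.mem_filter
        by_cases hxρ : x = ρ
        · subst hxρ
          obtain ⟨c', hc'⟩ := exists_edge_of_outdeg_pos
            (show 0 < M'.outdeg r' by omega)
          have hc'm : c' ∈ M'.verts := (gs.closed _ hc').2
          have hc'r' : c' ≠ r' := Ne.symm (acyc_ne gs.acy hc')
          set w := (M'.verts.sup id) + 1 with hwdef
          have hwf : w ∉ M'.verts := by
            intro h
            have h5 := Finset.le_sup (f := id) h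
            simp only [id] at h5
            omega
          have hr'w : r' ≠ w := fun h => hwf (h ▸ hr'm)
          have hstep : SubdivStep M' (M'.subdivNet r' c' w) := SubdivStep.mk _ r' c' w hc' hwf
          have hsub₂ : Subdivision N' (M'.subdivNet r' c' w) :=
            Relation.ReflTransGen.tail hsub hstep
          set g : ℕ → ℕ := fun y => if y = w then top else if y = r' then x else f y with hg
          have hgw : g w = top := by simp [hg]
          have hgr : g r' = x := by simp [hg, hr'w]
          have hgo : ∀ y ∈ M'.verts, y ≠ r' → g y = f y := by
            intro y hy hyr
            have hyw : y ≠ w := fun h => hwf (h ▸ hy)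
            simp [hg, hyw, hyr]
          have hfT : ∀ y ∈ M'.verts, f y ∈ T := fun y hy => Finset.mem_image.2 ⟨y, hy, rfl⟩
          have hftop : ∀ y ∈ M'.verts, f y = top → y = r' := fun y hy h =>
            hbij.injOn (Finset.mem_coe.2 hy) (Finset.mem_coe.2 hr'm) h
          have hRv : ∀ c, c ∈ (Rnet x).verts ↔ (c ∈ T ∨ c = x) := by
            intro c
            rw [hRnet]
            show c ∈ T ∪ AncU x ↔ _
            rw [Finset.mem_union, hAncρ, Finset.mem_singleton]
          have hRe : ∀ c d, (Rnet x).Edge c d ↔ ((c = x ∧ d = top) ∨ (c, d) ∈ TE) := by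
            intro c d
            rw [hRnet]
            show (c, d) ∈ insert (x, top) (TE ∪ P.edges.filter
              (fun e => e.1 ∈ AncU x ∧ e.2 ∈ AncU x)) ↔ _
            simp only [Finset.mem_insert, Finset.mem_union, Finset.mem_filter, Prod.mk.injEq]
            constructor
            · rintro (h | h | h)
              · exact Or.inl h
              · exact Or.inr h
              · exfalso
                obtain ⟨hm, hA, hB⟩ := h
                rw [hAncρ, Finset.mem_singleton] at hA hB
                rw [hA, hB] at hm
                exact acyc_ne hPA hm rfl
            · rintro (h | h)
              · exact Or.inl h
              · exact Or.inr (Or.inl h)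
          refine ⟨M'.subdivNet r' c' w, g, r', w, hsub₂,
            Finset.mem_insert_of_mem hr'm, Finset.mem_insert_self _ _, ?_, hgr, hgw,
            ⟨?_, ?_, ?_⟩, ?_, ?_⟩
          · show (r', w) ∈ insert (r', w) (insert (w, c') (M'.edges.erase (r', c')))
            exact Finset.mem_insert_self _ _
          · -- mapsTo
            intro y hy
            rw [Finset.mem_coe] at hy
            rw [Finset.mem_coe, hRv]
            rcases Finset.mem_insert.1 hy with rfl | hym
            · rw [hgw]; exact Or.inl htopT
            · by_cases hyr : y = r'
              · rw [hyr, hgr]; exact Or.inr rfl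
              · rw [hgo y hym hyr]; exact Or.inl (hfT y hym)
          · -- injOn
            intro y₁ h₁ y₂ h₂ heq
            rcases Finset.mem_insert.1 (Finset.mem_coe.1 h₁) with rfl | h₁m <;>
              rcases Finset.mem_insert.1 (Finset.mem_coe.1 h₂) with rfl | h₂m
            · rfl
            · exfalso
              by_cases hy₂r : y₂ = r'
              · rw [hgw, hy₂r, hgr] at heq
                exact htopρ heq
              · rw [hgw, hgo y₂ h₂m hy₂r] at heq
                exact hy₂r (hftop y₂ h₂m heq.symm)
            · exfalso
              by_cases hy₁r : y₁ = r'
              · rw [hgw, hy₁r, hgr] at heq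
                exact htopρ heq.symm
              · rw [hgw, hgo y₁ h₁m hy₁r] at heq
                exact hy₁r (hftop y₁ h₁m heq)
            · by_cases hy₁r : y₁ = r' <;> by_cases hy₂r : y₂ = r'
              · rw [hy₁r, hy₂r]
              · exfalso
                rw [hy₁r, hgr, hgo y₂ h₂m hy₂r] at heq
                exact hρT (by rw [heq]; exact hfT y₂ h₂m)
              · exfalso
                rw [hy₂r, hgr, hgo y₁ h₁m hy₁r] at heq
                exact hρT (by rw [← heq]; exact hfT y₁ h₁m)
              · rw [hgo y₁ h₁m hy₁r, hgo y₂ h₂m hy₂r] at heq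
                exact hbij.injOn (Finset.mem_coe.2 h₁m) (Finset.mem_coe.2 h₂m) heq
          · -- surjOn
            intro d hd
            rw [Finset.mem_coe, hRv] at hd
            rcases hd with hdT | rfl
            · obtain ⟨y, hy, rfl⟩ := Finset.mem_image.1 hdT
              by_cases hyr : y = r'
              · exact ⟨w, Finset.mem_coe.2 (Finset.mem_insert_self _ _),
                  by rw [hgw, hyr, htop]⟩
              · exact ⟨y, Finset.mem_coe.2 (Finset.mem_insert_of_mem hy), hgo y hy hyr⟩
            · exact ⟨r', Finset.mem_coe.2 (Finset.mem_insert_of_mem hr'm), hgr⟩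
          · -- edge iff
            intro y₁ h₁ y₂ h₂
            rw [hRe]
            constructor
            · intro he
              rcases (subdivNet_edge_iff (M := M')).1 he with ⟨ha, hb⟩ | ⟨ha, hb⟩ | ⟨hm, hne⟩
              · left; rw [ha, hb, hgr, hgw]; exact ⟨rfl, rfl⟩
              · right
                rw [ha, hb, hgw, hgo c' hc'm hc'r', htop]
                exact Finset.mem_image.2 ⟨(r', c'), hc', rfl⟩
              · have hy₁m : y₁ ∈ M'.verts := (gs.closed _ hm).1
                have hy₂m : y₂ ∈ M'.verts := (gs.closed _ hm).2
                have hy₂r : y₂ ≠ r' := by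
                  rintro rfl
                  have h5 := edge_indeg_pos (show M'.Edge y₁ y₂ from hm)
                  omega
                have hy₁r : y₁ ≠ r' := by
                  rintro rfl
                  exact hne ⟨rfl, outdeg_unique (le_of_eq hr'out) hm hc'⟩
                right
                rw [hgo y₁ hy₁m hy₁r, hgo y₂ hy₂m hy₂r]
                exact Finset.mem_image.2 ⟨(y₁, y₂), hm, rfl⟩
            · rintro (⟨ha, hb⟩ | hTEm)
              · have hy₁ : y₁ = r' := by
                  rcases Finset.mem_insert.1 h₁ with rfl | h₁m
                  · rw [hgw] at ha; exact absurd ha htopρ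
                  · by_cases hyr : y₁ = r'
                    · exact hyr
                    · exfalso
                      rw [hgo y₁ h₁m hyr] at ha
                      exact hρT (by rw [← ha]; exact hfT y₁ h₁m)
                have hy₂ : y₂ = w := by
                  rcases Finset.mem_insert.1 h₂ with rfl | h₂m
                  · rfl
                  · exfalso
                    by_cases hyr : y₂ = r'
                    · rw [hyr, hgr] at hb
                      exact htopρ hb.symm
                    · rw [hgo y₂ h₂m hyr] at hb
                      exact hyr (hftop y₂ h₂m hb)
                rw [hy₁, hy₂]
                exact (subdivNet_edge_iff (M := M') (u := r') (v := c') (w := w)).2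
                  (Or.inl ⟨rfl, rfl⟩)
              · obtain ⟨e', he', heq⟩ := Finset.mem_image.1 hTEm
                have he'1 : e'.1 ∈ M'.verts := (gs.closed _ he').1
                have he'2 : e'.2 ∈ M'.verts := (gs.closed _ he').2
                have heq1 : f e'.1 = g y₁ := congrArg Prod.fst heq
                have heq2 : f e'.2 = g y₂ := congrArg Prod.snd heq
                rcases Finset.mem_insert.1 h₁ with rfl | h₁m
                · -- y₁ = w
                  have h5 : e'.1 = r' := hftop e'.1 he'1 (heq1.trans hgw)
                  have h6 : e'.2 = c' := by
                    refine outdeg_unique (le_of_eq hr'out) ?_ hc'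
                    rw [← h5]
                    show (e'.1, e'.2) ∈ M'.edges
                    rw [Prod.mk.eta]
                    exact he'
                  have h7 : g y₂ = f c' := by rw [← heq2, h6]
                  have hy₂ : y₂ = c' := by
                    rcases Finset.mem_insert.1 h₂ with rfl | h₂m
                    · rw [hgw] at h7
                      exact absurd (hftop c' hc'm h7.symm) hc'r'
                    · by_cases hyr : y₂ = r'
                      · exfalso
                        rw [hyr, hgr] at h7
                        exact hρT (by rw [h7]; exact hfT c' hc'm)
                      · rw [hgo y₂ h₂m hyr] at h7
                        exact hbij.injOn (Finset.mem_coe.2 h₂m) (Finset.mem_coe.2 hc'm) h7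
                  rw [hy₂]
                  exact (subdivNet_edge_iff (M := M') (u := r') (v := c') (w := w)).2
                    (Or.inr (Or.inl ⟨rfl, rfl⟩))
                · have hy₁r : y₁ ≠ r' := by
                    rintro rfl
                    rw [hgr] at heq1
                    exact hρT (by rw [← heq1]; exact hfT e'.1 he'1)
                  have h5 : e'.1 = y₁ :=
                    hbij.injOn (Finset.mem_coe.2 he'1) (Finset.mem_coe.2 h₁m)
                      (heq1.trans (hgo y₁ h₁m hy₁r))
                  rcases Finset.mem_insert.1 h₂ with rfl | h₂m
                  · exfalso
                    have h6 : e'.2 = r' := hftop e'.2 he'2 (heq2.trans hgw)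
                    have h7 : M'.Edge e'.1 r' := by
                      rw [← h6]
                      show (e'.1, e'.2) ∈ M'.edges
                      rw [Prod.mk.eta]
                      exact he'
                    have := edge_indeg_pos h7
                    omega
                  · have hy₂r : y₂ ≠ r' := by
                      rintro rfl
                      rw [hgr] at heq2
                      exact hρT (by rw [← heq2]; exact hfT e'.2 he'2)
                    have h6 : e'.2 = y₂ :=
                      hbij.injOn (Finset.mem_coe.2 he'2) (Finset.mem_coe.2 h₂m)
                        (heq2.trans (hgo y₂ h₂m hy₂r))
                    apply (subdivNet_edge_iff (M := M') (u := r') (v := c') (w := w)).2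
                    right; right
                    constructor
                    · show (y₁, y₂) ∈ M'.edges
                      rw [← h5, ← h6, Prod.mk.eta]
                      exact he'
                    · rintro ⟨h8, -⟩
                      exact hy₁r h8
          · -- labels
            intro y hy
            show M'.lab y = (Rnet x).lab (g y)
            have hRlab : (Rnet x).lab = N.lab := by rw [hRnet]
            rw [hRlab]
            have hr'lab : N'.lab r' = none := by
              cases hc : N'.lab r' with
              | none => rfl
              | some xx =>
                exfalso
                have h5 := ((hN'.2.2.2.2.1 r').1 ⟨xx, hc⟩).2.2
                have h6 := hr'.2.2
                omega
            rcases Finset.mem_insert.1 hy with rfl | hym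
            · rw [hgw]
              have h1 : M'.lab w = none := by
                rw [gs.lab_eq]
                cases hc : N'.lab w with
                | none => rfl
                | some xx =>
                  exfalso
                  exact hwf (gs.verts_sub ((hN'.2.2.2.2.1 w).1 ⟨xx, hc⟩).1)
              have h2 : N.lab top = none := by
                rw [htop, hlabT r' hr'm, gs.lab_eq, hr'lab]
              rw [h1, h2]
            · by_cases hyr : y = r'
              · rw [hyr, hgr]
                have h1 : M'.lab r' = none := by rw [gs.lab_eq, hr'lab]
                have h2 : N.lab x = none := by
                  cases hc : N.lab x with
                  | none => rfl
                  | some xx =>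
                    exfalso
                    have h5 := ((hN.2.2.2.2.1 x).1 ⟨xx, hc⟩).2.1
                    have h6 := hρ.2.1
                    omega
                rw [h1, h2]
              · rw [hgo y hym hyr]
                exact (hlabT y hym).symm
        · -- step case
          obtain ⟨p, hpx, hplive, hpT, hpm, hpuniq⟩ := hUpar x hxm hxlive hxT hxρ
          have hpU : p ∈ U := Finset.mem_filter.2 ⟨hpm, hplive, hpT⟩
          have hlt := ancSet_card_lt hPC hPA hxm hpx
          obtain ⟨M₂, g, t₂, s₂, hsub₂, ht₂, hs₂, hts, hgt, hgs, hbij₂, hef₂, hlf₂⟩ :=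
            ih _ (hn ▸ hlt) p hpU rfl
          have gs₂ := goodSub_of_subdiv hN' hsub₂
          set z := (M₂.verts.sup id) + 1 with hzdef
          have hzf : z ∉ M₂.verts := by
            intro h
            have h5 := Finset.le_sup (f := id) h
            simp only [id] at h5
            omega
          have hstep : SubdivStep M₂ (M₂.subdivNet t₂ s₂ z) := SubdivStep.mk _ t₂ s₂ z hts hzf
          have hsub₃ : Subdivision N' (M₂.subdivNet t₂ s₂ z) :=
            Relation.ReflTransGen.tail hsub₂ hstep
          have hxAncp : x ∉ AncU p := by
            rw [hAncmem]
            rintro ⟨-, hxp⟩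
            exact hPA p x hpx hxp
          have hxR : x ∉ (Rnet p).verts := by
            rw [hRnet]
            simp only [Finset.mem_union]
            rintro (h | h)
            · exact hxT h
            · exact hxAncp h
          have hlabzx : M₂.lab z = (Rnet p).lab x := by
            rw [gs₂.lab_eq, hRnet]
            show N'.lab z = N.lab x
            have h1 : N'.lab z = none := by
              cases hc : N'.lab z with
              | none => rfl
              | some xx =>
                exfalso
                have hzN' : z ∈ N'.verts := ((hN'.2.2.2.2.1 z).1 ⟨xx, hc⟩).1
                exact hzf (gs₂.verts_sub hzN')
            have h2 : N.lab x = none := by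
              cases hc : N.lab x with
              | none => rfl
              | some xx => exact absurd (hleafcov x xx hc) hxT
            rw [h1, h2]
          obtain ⟨hbij₃, hef₃, hlf₃⟩ := iso_subdivNet hbij₂ hef₂ hlf₂ ht₂ hs₂ hzf hxR hlabzx
            gs₂.closed (hRclosed p hpU)
          rw [hgt, hgs] at hbij₃ hef₃ hlf₃
          have hReq : (Rnet p).subdivNet p top x = Rnet x := by
            refine net_eq ?_ ?_ ?_
            · show insert x ((Rnet p).verts) = (Rnet x).verts
              have hAncx : AncU x = insert x (AncU p) := by
                apply Finset.ext
                intro y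
                rw [hAncmem, Finset.mem_insert]
                constructor
                · rintro ⟨hyU, hyx⟩
                  rcases Relation.ReflTransGen.cases_tail hyx with heq | ⟨c, hyc, hc⟩
                  · exact Or.inl heq.symm
                  · right
                    rw [hAncmem]
                    refine ⟨hyU, ?_⟩
                    rw [← hpuniq c hc]
                    exact hyc
                · rintro (rfl | hyA)
                  · exact ⟨hxU, Relation.ReflTransGen.refl⟩
                  · rw [hAncmem] at hyA
                    exact ⟨hyA.1, hyA.2.trans hpx.reach⟩
              rw [hRnet]
              show insert x (T ∪ AncU p) = T ∪ AncU x
              rw [hAncx, Finset.union_insert]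
            · have h1 : ((Rnet p).edges).erase (p, top) =
                  TE ∪ P.edges.filter (fun e => e.1 ∈ AncU p ∧ e.2 ∈ AncU p) := by
                rw [hRnet]
                apply Finset.erase_insert
                simp only [Finset.mem_union, Finset.mem_filter]
                rintro (h | h)
                · exact hpT (hTEmem _ h).1
                · exact hUnotT _ (hAncsubU _ _ h.2.2) htopT
              have h2 : P.edges.filter (fun e => e.1 ∈ AncU x ∧ e.2 ∈ AncU x) =
                  insert (p, x) (P.edges.filter (fun e => e.1 ∈ AncU p ∧ e.2 ∈ AncU p)) := by
                apply Finset.ext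
                rintro ⟨a, b⟩
                simp only [Finset.mem_filter, Finset.mem_insert, Prod.mk.injEq]
                constructor
                · rintro ⟨hm, hA, hB⟩
                  rw [hAncmem] at hA hB
                  obtain ⟨haU, hax⟩ := hA
                  obtain ⟨hbU, hbx⟩ := hB
                  by_cases hbxeq : b = x
                  · left
                    exact ⟨hpuniq a (by rw [← hbxeq]; exact hm), hbxeq⟩
                  · right
                    have hbp : P.Reaches b p := by
                      rcases Relation.ReflTransGen.cases_tail hbx with heq | ⟨c, hbc, hc⟩
                      · exact absurd heq.symm hbxeq
                      · rw [← hpuniq c hc]; exact hbc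
                    have haxeq : a ≠ x := by
                      rintro rfl
                      exact hPA a b hm (hbp.trans hpx.reach)
                    have hap : P.Reaches a p := by
                      rcases Relation.ReflTransGen.cases_tail hax with heq | ⟨c, hac, hc⟩
                      · exact absurd heq.symm haxeq
                      · rw [← hpuniq c hc]; exact hac
                    refine ⟨hm, ?_, ?_⟩ <;> rw [hAncmem]
                    · exact ⟨haU, hap⟩
                    · exact ⟨hbU, hbp⟩
                · rintro (⟨rfl, rfl⟩ | ⟨hm, hA, hB⟩)
                  · refine ⟨hpx, ?_, ?_⟩ <;> rw [hAncmem]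
                    · exact ⟨hpU, hpx.reach⟩
                    · exact ⟨hxU, Relation.ReflTransGen.refl⟩
                  · rw [hAncmem] at hA hB
                    refine ⟨hm, ?_, ?_⟩ <;> rw [hAncmem]
                    · exact ⟨hA.1, hA.2.trans hpx.reach⟩
                    · exact ⟨hB.1, hB.2.trans hpx.reach⟩
              show insert (p, x) (insert (x, top) (((Rnet p).edges).erase (p, top))) =
                (Rnet x).edges
              rw [h1]
              rw [hRnet]
              show insert (p, x) (insert (x, top) (TE ∪ P.edges.filter
                  (fun e => e.1 ∈ AncU p ∧ e.2 ∈ AncU p))) =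
                insert (x, top) (TE ∪ P.edges.filter
                  (fun e => e.1 ∈ AncU x ∧ e.2 ∈ AncU x))
              rw [h2, Finset.union_insert, Finset.insert_comm]
            · rw [hRnet]
              rfl
          refine ⟨M₂.subdivNet t₂ s₂ z, (fun y => if y = z then x else g y), z, s₂, hsub₃,
            Finset.mem_insert_self _ _, Finset.mem_insert_of_mem hs₂, ?_, by simp, ?_,
            ?_, ?_, ?_⟩
          · show (z, s₂) ∈ insert (t₂, z) (insert (z, s₂) (M₂.edges.erase (t₂, s₂)))
            exact Finset.mem_insert_of_mem (Finset.mem_insert_self _ _)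
          · have h5 : s₂ ≠ z := by rintro rfl; exact hzf hs₂
            simp only [if_neg h5]
            exact hgs
          · rw [← hReq]; exact hbij₃
          · rw [← hReq]; exact hef₃
          · rw [← hReq]; exact hlf₃
    obtain ⟨M₂, g, t₂, s₂, hsub₂, -, -, -, -, -, hbijq, hefq, hlfq⟩ := PHI _ q hqU rfl
    have hLNR : Rnet q = P.LiveNet := by
      refine net_eq ?_ ?_ rfl
      · rw [hRnet]
        apply Finset.ext
        intro y
        simp only [Finset.mem_union, LiveNet, Finset.mem_filter]
        constructor
        · rintro (hyT | hyA)
          · exact ⟨hTsub hyT, hTlive y hyT⟩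
          · obtain ⟨hym, hylive, -⟩ := Finset.mem_filter.1 (hAncsubU _ _ hyA)
            exact ⟨hym, hylive⟩
        · rintro ⟨hym, hylive⟩
          by_cases hyT : y ∈ T
          · exact Or.inl hyT
          · exact Or.inr (hAncq_isU y (Finset.mem_filter.2 ⟨hym, hylive, hyT⟩))
      · rw [hRnet]
        apply Finset.ext
        rintro ⟨a, b⟩
        simp only [Finset.mem_insert, Finset.mem_union, Finset.mem_filter, LiveNet,
          Prod.mk.injEq]
        constructor
        · rintro (⟨rfl, rfl⟩ | hm | ⟨hm, hA, hB⟩)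
          · exact ⟨hq, hqlive, hTlive top htopT⟩
          · exact ⟨hTEP hm, hTlive _ (hTEmem _ hm).1, hTlive _ (hTEmem _ hm).2⟩
          · obtain ⟨-, hal, -⟩ := Finset.mem_filter.1 (hAncsubU _ _ hA)
            obtain ⟨-, hbl, -⟩ := Finset.mem_filter.1 (hAncsubU _ _ hB)
            exact ⟨hm, hal, hbl⟩
        · rintro ⟨hm, hal, hbl⟩
          by_cases haT : a ∈ T
          · by_cases hbT : b ∈ T
            · exact Or.inr (Or.inl (hTT a b hm haT hbT))
            · exact absurd hbl (hTdead a haT b hm hbT)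
          · have haU : a ∈ U := Finset.mem_filter.2 ⟨(hPC _ hm).1, hal, haT⟩
            by_cases hbT : b ∈ T
            · have hbtop := hentry a b haT hm hbT
              left
              refine ⟨?_, hbtop⟩
              apply hquniq
              rw [← hbtop]
              exact hm
            · have hbU : b ∈ U := Finset.mem_filter.2 ⟨(hPC _ hm).2, hbl, hbT⟩
              exact Or.inr (Or.inr ⟨hm, hAncq_isU a haU, hAncq_isU b hbU⟩)
    refine ⟨M₂, hsub₂, g, ?_, ?_, ?_⟩
    · rw [← hLNR]; exact hbijq
    · rw [← hLNR]; exact hefq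
    · rw [← hLNR]; exact hlfq

end Net

/-- If `N` displays `N'`, then `N'` is obtained from `N` by deleting,
for each reticulation, at most one incoming reticulation edge, and cleaning up. -/
theorem displays_iff_delete_retic_edges {X : Type} (N N' : Net X)
    (hN : N.IsNetwork) (hN' : N'.IsNetwork) (h : N.Displays N') :
    ∃ (E : Finset (ℕ × ℕ)) (M : Net X),
      (∀ e ∈ E, N.IsReticEdge e) ∧
      (∀ r, N.IsRetic r → ∀ e ∈ E, ∀ e' ∈ E, e.2 = r → e'.2 = r → e = e') ∧
      Net.CleansTo (N.deleteEdges E) M ∧ Net.Iso M N' := by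
  obtain ⟨S, M', hS, hsubdiv, hiso⟩ := h
  obtain ⟨E, hE1, hE2, hInv⟩ := Net.init_invar hN hN' hS hsubdiv hiso
  obtain ⟨M, hclean, hInvM⟩ := Net.clean_ex hN' hInv
  exact ⟨E, M, hE1,
    fun r _ e he e' he' h1 h2 => hE2 e he e' he' (h1.trans h2.symm),
    hclean, Net.terminal_iso hN' hInvM hclean.2⟩
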